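/- arXiv:2012.09964 — 12 statements merged into one kernel-verified Lean document; each statement's English description precedes it below -/
import Mathlib

section
/- Let P be any collection of measurement paths in G and let k ≥ 1. If G is k-identifiable with respect to P, then for every set V' ⊆ N of non-monitors with |V'| < k, the network G − V' (with monitor set M and non-monitor set N \ V') is (k − |V'|)-identifiable with respect to the collection of those paths in P that traverse no node of V'. -/
open SimpleGraph

/-- A measurement path in `G`: a walk together with its two endpoints. -/
abbrev MWalk {V : Type*} (G : SimpleGraph V) := Σ u : V, Σ v : V, G.Walk u v

/-- A measurement path traverses a node `x` iff `x` lies on the walk. -/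
def Traverses {V : Type*} {G : SimpleGraph V} (p : MWalk G) (x : V) : Prop :=
  x ∈ p.2.2.support

/-- Two failure sets `F`, `F'` are distinguishable w.r.t. the collection `P` of
measurement paths: some path of `P` traverses a node of one set but no node of
the other. -/
def Distinguishable {V : Type*} {G : SimpleGraph V} (P : Set (MWalk G))
    (F F' : Set V) : Prop :=
  (∃ p ∈ P, (∃ x ∈ F, Traverses p x) ∧ ∀ x ∈ F', ¬ Traverses p x) ∨
  (∃ p ∈ P, (∃ x ∈ F', Traverses p x) ∧ ∀ x ∈ F, ¬ Traverses p x)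

/-- `k`-identifiability w.r.t. paths `P`, where failure sets range over subsets
of the non-monitor set `Nm`. -/
def Identifiable {V : Type*} {G : SimpleGraph V} (P : Set (MWalk G))
    (Nm : Set V) (k : ℕ) : Prop :=
  ∀ F F' : Set V, F ⊆ Nm → F' ⊆ Nm → F.ncard ≤ k → F'.ncard ≤ k → F ≠ F' →
    Distinguishable P F F'

/-- CAP measurement paths: all walks whose two endpoints are monitors
(endpoints may coincide, nodes may be revisited). -/
def CAP {V : Type*} (G : SimpleGraph V) (M : Set V) : Set (MWalk G) :=
  { p | p.1 ∈ M ∧ p.2.1 ∈ M }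

/-- CSP measurement paths: all simple (cycle-free) paths whose two endpoints
are distinct monitors. -/
def CSP {V : Type*} (G : SimpleGraph V) (M : Set V) : Set (MWalk G) :=
  { p | p.1 ∈ M ∧ p.2.1 ∈ M ∧ p.1 ≠ p.2.1 ∧ p.2.2.IsPath }

/-- Every connected component of `G − V'` contains at least one monitor. -/
def ComponentsHaveMonitor {V : Type*} (G : SimpleGraph V) (M : Set V)
    (V' : Set V) : Prop :=
  ∀ v : ↥(V'ᶜ), ∃ m : ↥(V'ᶜ), (m : V) ∈ M ∧ (G.induce V'ᶜ).Reachable v m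

/-- The auxiliary graph on the non-monitors `Nm` plus a new virtual monitor
`m'` (the vertex `none`), where the monitors in `M'` are used to create the
virtual links: edges of `G` between non-monitors are kept; `m'` is joined to
each non-monitor adjacent in `G` to some monitor in `M'`; and two non-monitors
each adjacent in `G` to some monitor in `M'` are joined.
`G* = StarGraph G Mᶜ M` and `G_m = StarGraph G Mᶜ (M \ {m})`. -/
def StarGraph {V : Type*} (G : SimpleGraph V) (Nm M' : Set V) :
    SimpleGraph (Option ↥Nm) where
  Adj x y :=
    match x, y with
    | none, none => False
    | none, some u => ∃ m ∈ M', G.Adj (u : V) m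
    | some u, none => ∃ m ∈ M', G.Adj (u : V) m
    | some u, some w => (u : V) ≠ (w : V) ∧
        (G.Adj (u : V) (w : V) ∨
          ((∃ m ∈ M', G.Adj (u : V) m) ∧ ∃ m ∈ M', G.Adj (w : V) m))
  symm := by
    constructor
    rintro (_ | u) (_ | w) h
    · exact h
    · exact h
    · exact h
    · exact ⟨fun e => h.1 e.symm, h.2.imp (fun hh => hh.symm) fun hh => ⟨hh.2, hh.1⟩⟩
  loopless := by
    constructor
    rintro (_ | u) h
    · exact h
    · exact h.1 rfl

/-- A graph `H` is `k`-vertex-connected: it has more than `k` vertices and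
removing fewer than `k` vertices leaves it connected. -/
def KConnected {W : Type*} (H : SimpleGraph W) (k : ℕ) : Prop :=
  k < Nat.card W ∧ ∀ S : Set W, S.ncard < k → (H.induce Sᶜ).Connected

/-- The vertex connectivity `δ(H)`: the largest `k` such that `H` is
`k`-vertex-connected. -/
noncomputable def vertexConnectivity {W : Type*} (H : SimpleGraph W) : ℕ :=
  sSup { k | KConnected H k }

/-- The maximum identifiability: the largest `k ∈ {0, …, |Nm|}` such that the
network is `k`-identifiable w.r.t. `P`. -/
noncomputable def maxIdent {V : Type*} {G : SimpleGraph V} (P : Set (MWalk G))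
    (Nm : Set V) : ℕ :=
  sSup { k | k ≤ Nm.ncard ∧ Identifiable P Nm k }

/-- `MSC(v)`: the minimum cardinality of a set `V' ⊆ Nm \ {v}` of non-monitors
such that every path of `P` traversing `v` traverses some node of `V'`
(`⊤ = ∞` if no such set exists). -/
noncomputable def MSC {V : Type*} {G : SimpleGraph V} (P : Set (MWalk G))
    (Nm : Set V) (v : V) : ℕ∞ :=
  sInf { n : ℕ∞ | ∃ V' : Set V, V' ⊆ Nm \ {v} ∧
    (∀ p ∈ P, Traverses p v → ∃ x ∈ V', Traverses p x) ∧ n = (V'.ncard : ℕ∞) }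

/-- Abstract necessary condition: if `G` is `k`-identifiable w.r.t. `P`, then
for every set `V'` of fewer than `k` non-monitors, the network `G − V'`
(non-monitors `Mᶜ \ V'`) is `(k − |V'|)`-identifiable w.r.t. the paths of `P`
traversing no node of `V'`. -/
theorem stmt_1 {V : Type*} [Fintype V] (G : SimpleGraph V) (hG : G.Connected)
    (M : Set V) (hM : M.Nonempty) (P : Set (MWalk G)) (k : ℕ) (hk : 1 ≤ k)
    (hid : Identifiable P Mᶜ k) :
    ∀ V' : Set V, V' ⊆ Mᶜ → V'.ncard < k →
      Identifiable { p ∈ P | ∀ x ∈ V', ¬ Traverses p x } (Mᶜ \ V')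
        (k - V'.ncard) := by
  intro V' hV' hV'k F F' hF hF' hFk hF'k hne
  have hFV' : F ∩ V' = ∅ := by
    ext x; simp only [Set.mem_inter_iff, Set.mem_empty_iff_false, iff_false]
    rintro ⟨hx, hx'⟩; exact (hF hx).2 hx'
  have hF'V' : F' ∩ V' = ∅ := by
    ext x; simp only [Set.mem_inter_iff, Set.mem_empty_iff_false, iff_false]
    rintro ⟨hx, hx'⟩; exact (hF' hx).2 hx'
  have hcard : ∀ S : Set V, S ⊆ Mᶜ \ V' → S.ncard ≤ k - V'.ncard →
      (S ∪ V').ncard ≤ k := by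
    intro S hS hSc
    calc (S ∪ V').ncard ≤ S.ncard + V'.ncard :=
          Set.ncard_union_le S V'
      _ ≤ (k - V'.ncard) + V'.ncard := by omega
      _ = k := by omega
  have hsub : ∀ S : Set V, S ⊆ Mᶜ \ V' → S ∪ V' ⊆ Mᶜ := by
    intro S hS x hx
    rcases hx with hx | hx
    · exact (hS hx).1
    · exact hV' hx
  have hneq : F ∪ V' ≠ F' ∪ V' := by
    intro h
    apply hne
    have : ∀ S : Set V, S ∩ V' = ∅ → (S ∪ V') \ V' = S := by
      intro S hS
      ext x
      simp only [Set.mem_diff, Set.mem_union]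
      constructor
      · rintro ⟨hx | hx, hnx⟩
        · exact hx
        · exact absurd hx hnx
      · intro hx
        refine ⟨Or.inl hx, fun hx' => ?_⟩
        have : x ∈ S ∩ V' := ⟨hx, hx'⟩
        rw [hS] at this; exact this
    rw [← this F hFV', ← this F' hF'V', h]
  have := hid (F ∪ V') (F' ∪ V') (hsub F hF) (hsub F' hF')
    (hcard F hF hFk) (hcard F' hF' hF'k) hneq
  rcases this with ⟨p, hp, ⟨x, hx, hxt⟩, havoid⟩ | ⟨p, hp, ⟨x, hx, hxt⟩, havoid⟩
  · left
    refine ⟨p, ⟨hp, fun y hy => havoid y (Or.inr hy)⟩, ⟨x, ?_, hxt⟩,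
      fun y hy => havoid y (Or.inl hy)⟩
    rcases hx with hx | hx
    · exact hx
    · exact absurd hxt (havoid x (Or.inr hx))
  · right
    refine ⟨p, ⟨hp, fun y hy => havoid y (Or.inr hy)⟩, ⟨x, ?_, hxt⟩,
      fun y hy => havoid y (Or.inl hy)⟩
    rcases hx with hx | hx
    · exact hx
    · exact absurd hxt (havoid x (Or.inr hx))
end

section
/- If for every set V' ⊆ N of non-monitors with |V'| ≤ k, every connected component of G − V' contains at least one monitor, then G is k-identifiable under CAP. -/
open SimpleGraph

/-- Sufficient condition for `k`-identifiability under CAP: whenever at most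
`k` non-monitors are removed, every connected component of the remaining graph
contains a monitor. -/
theorem stmt_2 {V : Type*} [Fintype V] (G : SimpleGraph V) (hG : G.Connected)
    (M : Set V) (hM : M.Nonempty) (k : ℕ)
    (h : ∀ V' : Set V, V' ⊆ Mᶜ → V'.ncard ≤ k → ComponentsHaveMonitor G M V') :
    Identifiable (CAP G M) Mᶜ k := by
  have key : ∀ F F' : Set V, F' ⊆ Mᶜ → F'.ncard ≤ k → ∀ v, v ∈ F → v ∉ F' →
      ∃ p ∈ CAP G M, (∃ x ∈ F, Traverses p x) ∧ ∀ x ∈ F', ¬ Traverses p x := by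
    intro F F' hF' hk' v hv hv'
    obtain ⟨m, hmM, ⟨w⟩⟩ := h F' hF' hk' ⟨v, hv'⟩
    let f : G.induce F'ᶜ →g G := ⟨Subtype.val, fun {a b} hab => hab⟩
    let w' := w.map f
    have hsup : ∀ x ∈ w'.support, x ∉ F' := by
      intro x hx
      rw [Walk.support_map, List.mem_map] at hx
      obtain ⟨a, _, rfl⟩ := hx
      exact a.2
    refine ⟨⟨m, m, w'.reverse.append w'⟩, ⟨hmM, hmM⟩, ⟨v, hv, ?_⟩, ?_⟩
    · show v ∈ (w'.reverse.append w').support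
      rw [Walk.mem_support_append_iff]
      exact Or.inr w'.start_mem_support
    · intro x hx htrav
      have : x ∈ (w'.reverse.append w').support := htrav
      rw [Walk.mem_support_append_iff, Walk.support_reverse, List.mem_reverse] at this
      exact hsup x (this.elim id id) hx
  intro F F' hF hF' hk hk' hne
  have : (∃ v, v ∈ F ∧ v ∉ F') ∨ ∃ v, v ∈ F' ∧ v ∉ F := by
    by_contra hc
    push_neg at hc
    exact hne (Set.Subset.antisymm (fun x hx => hc.1 x hx) (fun x hx => hc.2 x hx))
  rcases this with ⟨v, hv, hv'⟩ | ⟨v, hv, hv'⟩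
  · exact Or.inl (key F F' hF' hk' v hv hv')
  · exact Or.inr (key F' F hF hk v hv hv')
end

section
/- If G is k-identifiable under CAP, then for every set V' ⊆ N of non-monitors with |V'| ≤ k − 1, every connected component of G − V' contains at least one monitor. -/
open SimpleGraph

private lemma reach_induce {V : Type*} {G : SimpleGraph V} {S : Set V} :
    ∀ {a b : V} (w : G.Walk a b) (hs : ∀ x ∈ w.support, x ∈ S),
    (G.induce S).Reachable ⟨a, hs a w.start_mem_support⟩ ⟨b, hs b w.end_mem_support⟩ := by
  intro a b w
  induction w with
  | nil => intro _; exact Reachable.refl _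
  | @cons a c b h p ih =>
    intro hs
    have hc : c ∈ S := hs c (by simp)
    have hadj : (G.induce S).Adj ⟨a, hs a (Walk.start_mem_support _)⟩ ⟨c, hc⟩ := h
    refine Reachable.trans hadj.reachable ?_
    exact ih fun x hx => hs x (by simp [hx])

/-- Necessary condition for `k`-identifiability under CAP: whenever at most
`k − 1` non-monitors are removed, every connected component of the remaining
graph contains a monitor. -/
theorem stmt_3 {V : Type*} [Fintype V] (G : SimpleGraph V) (hG : G.Connected)
    (M : Set V) (hM : M.Nonempty) (k : ℕ)
    (hid : Identifiable (CAP G M) Mᶜ k) :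
    ∀ V' : Set V, V' ⊆ Mᶜ → V'.ncard < k → ComponentsHaveMonitor G M V' := by
  intro V' hV' hlt v
  by_contra hno
  push_neg at hno
  have hvM : (v : V) ∉ M := fun h => hno v h (Reachable.refl _)
  have hF : insert (v : V) V' ⊆ Mᶜ := by
    intro x hx
    rcases hx with rfl | hx
    · exact hvM
    · exact hV' hx
  have hFc : (insert (v : V) V').ncard ≤ k := by
    have := Set.ncard_insert_le (v : V) V'
    omega
  have hne : insert (v : V) V' ≠ V' := by
    intro h
    have hv := Set.mem_insert (v : V) V'
    rw [h] at hv
    exact v.2 hv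
  rcases hid _ V' hF hV' hFc hlt.le hne with
      ⟨p, hp, ⟨x, hxF, hxtr⟩, havoid⟩ | ⟨p, hp, ⟨x, hxV', hxtr⟩, havoid⟩
  · have hx : x = (v : V) := by
      rcases hxF with rfl | hx
      · rfl
      · exact absurd hxtr (havoid x hx)
    classical
    rw [hx] at hxtr
    have hv : (v : V) ∈ p.2.2.support := hxtr
    have hsw : ∀ y ∈ (p.2.2.takeUntil (v : V) hv).support, y ∈ V'ᶜ :=
      fun y hy hyV' => havoid y hyV' (Walk.support_takeUntil_subset _ hv hy)
    have hreach := (reach_induce (p.2.2.takeUntil (v : V) hv) hsw).symm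
    exact hno ⟨p.1, hsw p.1 (Walk.start_mem_support _)⟩ hp.1 hreach
  · exact havoid x (Set.mem_insert_of_mem _ hxV') hxtr
end

section
/- Let s be an integer with 0 ≤ s ≤ σ − 1. Then the following are equivalent: (1) for every set V' ⊆ N of non-monitors with |V'| ≤ s, every connected component of G − V' contains at least one monitor; (2) the auxiliary graph G* is (s+1)-vertex-connected. -/
open SimpleGraph

section AuxLemmas

variable {V : Type*} {G : SimpleGraph V} {M V' : Set V} {S : Set (Option ↥Mᶜ)}

/-- Forward conversion: from a walk in `G − V'` ending at a monitor, starting at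
a non-monitor, produce a non-monitor `u₁` adjacent to a monitor which is
reachable from the start in the star graph minus `S`. -/
lemma aux_fw (hS : ∀ u : ↥Mᶜ, some u ∈ S ↔ (u : V) ∈ V') :
    ∀ (x t : ↥(V'ᶜ)) (_ : (G.induce V'ᶜ).Walk x t) (_ : (t : V) ∈ M)
      (hx : (x : V) ∉ M),
    ∃ (u₁ : ↥Mᶜ) (h1 : some u₁ ∈ Sᶜ) (h2 : some (⟨(x : V), hx⟩ : ↥Mᶜ) ∈ Sᶜ),
      ((u₁ : V) ∉ V') ∧ (∃ m ∈ M, G.Adj (u₁ : V) m) ∧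
      ((StarGraph G Mᶜ M).induce Sᶜ).Reachable
        ⟨some ⟨(x : V), hx⟩, h2⟩ ⟨some u₁, h1⟩ := by
  intro x t p
  induction p with
  | nil =>
    intro ht hx
    exact absurd ht hx
  | @cons x y t hadj q ih =>
    intro ht hx
    have hGxy : G.Adj (x : V) (y : V) := hadj
    have hxV : (x : V) ∉ V' := x.2
    have hxS : some (⟨(x : V), hx⟩ : ↥Mᶜ) ∈ Sᶜ :=
      fun h => hxV ((hS ⟨(x : V), hx⟩).mp h)
    by_cases hyM : (y : V) ∈ M
    · exact ⟨⟨(x : V), hx⟩, hxS, hxS, hxV, ⟨(y : V), hyM, hGxy⟩, Reachable.refl _⟩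
    · obtain ⟨u₁, h1, h2, hu₁V, hm, hr⟩ := ih ht hyM
      have hadj' : ((StarGraph G Mᶜ M).induce Sᶜ).Adj
          ⟨some ⟨(x : V), hx⟩, hxS⟩ ⟨some ⟨(y : V), hyM⟩, h2⟩ :=
        ⟨hGxy.ne, Or.inl hGxy⟩
      exact ⟨u₁, h1, hxS, hu₁V, hm, hadj'.reachable.trans hr⟩

/-- Backward conversion: from a walk in the star graph minus `S` from a
non-monitor to the virtual monitor `none`, produce a monitor reachable from
that non-monitor in `G − V'`. -/
lemma aux_bw (hV' : V' ⊆ Mᶜ) (hS : ∀ u : ↥Mᶜ, some u ∈ S ↔ (u : V) ∈ V') :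
    ∀ (a z : ↥Sᶜ) (_ : ((StarGraph G Mᶜ M).induce Sᶜ).Walk a z)
      (u : ↥Mᶜ) (_ : (a : Option ↥Mᶜ) = some u) (huV : (u : V) ∉ V')
      (_ : (z : Option ↥Mᶜ) = none),
    ∃ m : ↥(V'ᶜ), (m : V) ∈ M ∧ (G.induce V'ᶜ).Reachable ⟨(u : V), huV⟩ m := by
  intro a z w
  induction w with
  | nil =>
    intro u hu _ hz
    rw [hz] at hu
    simp at hu
  | @cons a b t hadj q ih =>
    intro u hu huV hz
    have hadj' : (StarGraph G Mᶜ M).Adj (a : Option ↥Mᶜ) (b : Option ↥Mᶜ) := hadj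
    rw [hu] at hadj'
    rcases hb : (b : Option ↥Mᶜ) with _ | u'
    · rw [hb] at hadj'
      obtain ⟨m, hmM, hGum⟩ := hadj'
      have hmV : m ∈ V'ᶜ := fun h => hV' h hmM
      exact ⟨⟨m, hmV⟩, hmM,
        (show (G.induce V'ᶜ).Adj ⟨(u : V), huV⟩ ⟨m, hmV⟩ from hGum).reachable⟩
    · rw [hb] at hadj'
      have hbS : some u' ∉ S := by rw [← hb]; exact b.2
      have hu'V : (u' : V) ∉ V' := fun h => hbS ((hS u').mpr h)
      rcases hadj'.2 with hGuu' | ⟨⟨m, hmM, hGum⟩, _⟩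
      · obtain ⟨mm, hmmM, hre⟩ := ih u' hb hu'V hz
        exact ⟨mm, hmmM,
          (show (G.induce V'ᶜ).Adj ⟨(u : V), huV⟩ ⟨(u' : V), hu'V⟩ from
            hGuu').reachable.trans hre⟩
      · have hmV : m ∈ V'ᶜ := fun h => hV' h hmM
        exact ⟨⟨m, hmV⟩, hmM,
          (show (G.induce V'ᶜ).Adj ⟨(u : V), huV⟩ ⟨m, hmV⟩ from hGum).reachable⟩

end AuxLemmas

/-- For `0 ≤ s ≤ σ − 1`: every component of `G − V'` contains a monitor for
every set `V'` of at most `s` non-monitors iff the auxiliary graph `G*` is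
`(s+1)`-vertex-connected. -/
theorem stmt_4 {V : Type*} [Fintype V] (G : SimpleGraph V) (hG : G.Connected)
    (M : Set V) (hM : M.Nonempty) (s : ℕ) (hs : s + 1 ≤ Mᶜ.ncard) :
    (∀ V' : Set V, V' ⊆ Mᶜ → V'.ncard ≤ s → ComponentsHaveMonitor G M V') ↔
      KConnected (StarGraph G Mᶜ M) (s + 1) := by
  haveI : Fintype ↥Mᶜ := Fintype.ofFinite _
  haveI : Finite (Option ↥Mᶜ) := inferInstance
  have hcardOpt : Nat.card (Option ↥Mᶜ) = Mᶜ.ncard + 1 := by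
    rw [Finite.card_option, Nat.card_coe_set_eq]
  constructor
  · -- forward direction
    intro hyp
    refine ⟨by omega, ?_⟩
    intro S hScard
    set V' : Set V := Subtype.val '' {u : ↥Mᶜ | some u ∈ S} with hV'def
    have hS : ∀ u : ↥Mᶜ, some u ∈ S ↔ (u : V) ∈ V' := by
      intro u
      constructor
      · intro h; exact ⟨u, h, rfl⟩
      · rintro ⟨u', hu', he⟩
        rwa [Subtype.val_injective he] at hu'
    have hV' : V' ⊆ Mᶜ := by
      rintro _ ⟨u, _, rfl⟩; exact u.2
    have hV'card : V'.ncard ≤ s := by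
      have h1 : V'.ncard = {u : ↥Mᶜ | some u ∈ S}.ncard :=
        Set.ncard_image_of_injective _ Subtype.val_injective
      have h2 : {u : ↥Mᶜ | some u ∈ S}.ncard
          = (some '' {u : ↥Mᶜ | some u ∈ S}).ncard :=
        (Set.ncard_image_of_injective _ (Option.some_injective _)).symm
      have h3 : some '' {u : ↥Mᶜ | some u ∈ S} ⊆ S := by
        rintro _ ⟨u, hu, rfl⟩; exact hu
      haveI : Finite ↥Mᶜ := Subtype.finite
      have h4 := Set.ncard_le_ncard h3 (Set.toFinite S)
      omega
    have CHM := hyp V' hV' hV'card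
    rw [connected_iff]
    -- key helper: from any surviving non-monitor, reach a non-monitor adjacent
    -- to a monitor inside the star graph minus S
    have h1 : ∀ (u : ↥Mᶜ), (u : V) ∉ V' →
        ∃ (u₁ : ↥Mᶜ) (h1 : some u₁ ∈ Sᶜ) (h2 : some u ∈ Sᶜ),
          (∃ m ∈ M, G.Adj (u₁ : V) m) ∧
          ((StarGraph G Mᶜ M).induce Sᶜ).Reachable ⟨some u, h2⟩ ⟨some u₁, h1⟩ := by
      intro u huV
      have hu' : (u : V) ∈ V'ᶜ := huV
      obtain ⟨mv, hmvM, hre⟩ := CHM ⟨(u : V), hu'⟩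
      obtain ⟨p⟩ := hre
      obtain ⟨u₁, ha, hb, _, hm, hr⟩ := aux_fw hS ⟨(u : V), hu'⟩ mv p hmvM u.2
      exact ⟨u₁, ha, hb, hm, hr⟩
    constructor
    · -- preconnected
      rintro ⟨av, haS⟩ ⟨bv, hbS⟩
      have toNone : ∀ (u : ↥Mᶜ) (huS : some u ∈ Sᶜ) (hnS : none ∈ Sᶜ),
          ((StarGraph G Mᶜ M).induce Sᶜ).Reachable ⟨some u, huS⟩ ⟨none, hnS⟩ := by
        intro u huS hnS
        have huV : (u : V) ∉ V' := fun h => huS ((hS u).mpr h)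
        obtain ⟨u₁, ha, hb, hm, hr⟩ := h1 u huV
        have hadj : ((StarGraph G Mᶜ M).induce Sᶜ).Adj ⟨some u₁, ha⟩ ⟨none, hnS⟩ := hm
        exact hr.trans hadj.reachable
      match av, bv with
      | none, none => rfl
      | none, some w => exact (toNone w hbS haS).symm
      | some u, none => exact toNone u haS hbS
      | some u, some w =>
        have huV : (u : V) ∉ V' := fun h => haS ((hS u).mpr h)
        have hwV : (w : V) ∉ V' := fun h => hbS ((hS w).mpr h)
        obtain ⟨u₁, ha1, _, hmu, hru⟩ := h1 u huV
        obtain ⟨w₁, hb1, _, hmw, hrw⟩ := h1 w hwV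
        by_cases hew : u₁ = w₁
        · subst hew
          exact hru.trans hrw.symm
        · have hadj : ((StarGraph G Mᶜ M).induce Sᶜ).Adj ⟨some u₁, ha1⟩ ⟨some w₁, hb1⟩ :=
            ⟨fun h => hew (Subtype.ext h), Or.inr ⟨hmu, hmw⟩⟩
          exact (hru.trans hadj.reachable).trans hrw.symm
    · -- nonempty
      rw [Set.nonempty_coe_sort]
      by_contra h
      rw [Set.not_nonempty_iff_eq_empty, Set.compl_empty_iff] at h
      have : S.ncard = Mᶜ.ncard + 1 := by
        rw [h, Set.ncard_univ, hcardOpt]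
      omega
  · -- backward direction
    rintro ⟨_, hconn⟩ V' hV' hV's
    set S : Set (Option ↥Mᶜ) := {x | ∃ u : ↥Mᶜ, x = some u ∧ (u : V) ∈ V'} with hSdef
    have hS : ∀ u : ↥Mᶜ, some u ∈ S ↔ (u : V) ∈ V' := by
      intro u
      constructor
      · rintro ⟨u', he, h⟩
        rwa [Option.some_injective _ he]
      · intro h; exact ⟨u, rfl, h⟩
    have hnS : none ∈ Sᶜ := by
      rintro ⟨u, h, _⟩; simp at h
    have hScard : S.ncard < s + 1 := by
      have hSeq : S = some '' {u : ↥Mᶜ | (u : V) ∈ V'} := by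
        ext x
        constructor
        · rintro ⟨u, rfl, h⟩; exact ⟨u, h, rfl⟩
        · rintro ⟨u, h, rfl⟩; exact ⟨u, rfl, h⟩
      have hVeq : Subtype.val '' {u : ↥Mᶜ | (u : V) ∈ V'} = V' := by
        ext x
        constructor
        · rintro ⟨u, h, rfl⟩; exact h
        · intro h; exact ⟨⟨x, hV' h⟩, h, rfl⟩
      have e1 : S.ncard = {u : ↥Mᶜ | (u : V) ∈ V'}.ncard := by
        rw [hSeq, Set.ncard_image_of_injective _ (Option.some_injective _)]
      have e2 : {u : ↥Mᶜ | (u : V) ∈ V'}.ncard = V'.ncard := by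
        conv_rhs => rw [← hVeq]
        exact (Set.ncard_image_of_injective _ Subtype.val_injective).symm
      omega
    have hCon := hconn S hScard
    intro v
    by_cases hvM : (v : V) ∈ M
    · exact ⟨v, hvM, Reachable.refl _⟩
    · have huS : some (⟨(v : V), hvM⟩ : ↥Mᶜ) ∈ Sᶜ :=
        fun h => v.2 ((hS ⟨(v : V), hvM⟩).mp h)
      obtain ⟨p⟩ := hCon.preconnected ⟨some ⟨(v : V), hvM⟩, huS⟩ ⟨none, hnS⟩
      obtain ⟨m, hmM, hre⟩ := aux_bw hV' hS _ _ p ⟨(v : V), hvM⟩ rfl v.2 rfl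
      exact ⟨m, hmM, hre⟩
end

section
/- G is σ-identifiable under CAP if and only if every non-monitor is adjacent in G to at least one monitor. -/
open SimpleGraph

lemma one_sided {V : Type*} {G : SimpleGraph V} {M : Set V} {F F' : Set V}
    (hF' : F' ⊆ Mᶜ) {v : V} (hvF : v ∈ F) (hvF' : v ∉ F')
    (hadj : ∃ m ∈ M, G.Adj v m) :
    ∃ p ∈ CAP G M, (∃ x ∈ F, Traverses p x) ∧ ∀ x ∈ F', ¬ Traverses p x := by
  obtain ⟨m, hm, hvm⟩ := hadj
  refine ⟨⟨m, m, SimpleGraph.Walk.cons hvm.symm (SimpleGraph.Walk.cons hvm SimpleGraph.Walk.nil)⟩,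
    ⟨hm, hm⟩, ⟨v, hvF, ?_⟩, ?_⟩
  · simp [Traverses]
  · intro x hx hT
    simp only [Traverses, SimpleGraph.Walk.support_cons, SimpleGraph.Walk.support_nil,
      List.mem_cons, List.mem_singleton] at hT
    rcases hT with rfl | rfl | rfl | h
    · exact hF' hx hm
    · exact hvF' hx
    · exact hF' hx hm
    · exact (List.not_mem_nil h)

/-- `G` is `σ`-identifiable under CAP iff every non-monitor is adjacent to at
least one monitor. -/
theorem stmt_5 {V : Type*} [Fintype V] (G : SimpleGraph V) (hG : G.Connected)
    (M : Set V) (hM : M.Nonempty) :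
    Identifiable (CAP G M) Mᶜ Mᶜ.ncard ↔ ∀ v ∈ Mᶜ, ∃ m ∈ M, G.Adj v m := by
  classical
  constructor
  · intro h v hv
    by_contra hadj
    push_neg at hadj
    have hsub : Mᶜ \ {v} ⊆ Mᶜ := Set.diff_subset
    have hne : Mᶜ ≠ Mᶜ \ {v} := by
      intro he
      have : v ∈ Mᶜ \ {v} := he ▸ hv
      exact this.2 rfl
    have hd := h Mᶜ (Mᶜ \ {v}) le_rfl.subset hsub le_rfl
      (Set.ncard_le_ncard hsub (Set.toFinite _)) hne
    rcases hd with ⟨p, hp, ⟨x, hx, hTx⟩, hnone⟩ | ⟨p, hp, ⟨x, hx, hTx⟩, hnone⟩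
    · have hxv : x = v := by
        by_contra hxv
        exact hnone x ⟨hx, hxv⟩ hTx
      subst hxv
      obtain ⟨u, w, q⟩ := p
      obtain ⟨hu, hw⟩ := hp
      have hxsup : x ∈ q.support := hTx
      have hxw : x ≠ w := fun he => hv (he ▸ hw)
      have hsub' := q.support_dropUntil_subset hxsup
      set q' := q.dropUntil x hxsup with hq'
      clear_value q'
      cases q' with
      | nil => exact hxw rfl
      | cons ha r =>
        rename_i y
        have hyM : y ∉ M := fun hyM => hadj y hyM ha
        have hyx : y ≠ x := fun he => G.loopless.irrefl x (he ▸ ha)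
        have hysup : y ∈ q.support := hsub' (by simp)
        exact hnone y ⟨hyM, hyx⟩ hysup
    · exact hnone x (hsub hx) hTx
  · intro h F F' hF hF' _ _ hne
    by_cases hc : F ⊆ F'
    · obtain ⟨v, hvF', hvF⟩ := Set.not_subset.mp (fun hc' => hne (hc.antisymm hc'))
      exact Or.inr (one_sided hF hvF' hvF (h v (hF' hvF')))
    · obtain ⟨v, hvF, hvF'⟩ := Set.not_subset.mp hc
      exact Or.inl (one_sided hF' hvF hvF' (h v (hF hvF)))
end

section
/- If G is k-identifiable under CSP, then for every set V' ⊆ V with |V'| ≤ k that contains at most one monitor, every connected component of G − V' contains at least one monitor. -/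
open SimpleGraph

private lemma walk_avoid_reachable {V : Type*} {G : SimpleGraph V} {V' : Set V}
    {a b : V} (q : G.Walk a b) (hq : ∀ x ∈ q.support, x ∉ V') :
    (G.induce V'ᶜ).Reachable ⟨a, hq a q.start_mem_support⟩
      ⟨b, hq b q.end_mem_support⟩ := by
  induction q with
  | nil => exact Reachable.refl _
  | @cons u c b h p ih =>
    have hmem : ∀ x ∈ p.support, x ∉ V' := fun x hx =>
      hq x (by simp [SimpleGraph.Walk.support_cons, hx])
    have hadj : (G.induce V'ᶜ).Adj ⟨u, hq u (SimpleGraph.Walk.start_mem_support _)⟩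
        ⟨c, hmem c p.start_mem_support⟩ := h
    exact hadj.reachable.trans (ih hmem)

/-- Necessary condition for `k`-identifiability under CSP: whenever at most
`k` nodes containing at most one monitor are removed, every connected component
of the remaining graph contains a monitor. -/
theorem stmt_7 {V : Type*} [Fintype V] (G : SimpleGraph V) (hG : G.Connected)
    (M : Set V) (hM : M.Nonempty) (k : ℕ)
    (hid : Identifiable (CSP G M) Mᶜ k) :
    ∀ V' : Set V, V'.ncard ≤ k → (V' ∩ M).ncard ≤ 1 →
      ComponentsHaveMonitor G M V' := by
  classical
  intro V' hcard hcap v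
  by_contra hcon
  push_neg at hcon
  -- every walk from v to a monitor meets V'
  have key : ∀ (b : V) (q : G.Walk (v : V) b), b ∈ M → ∃ x ∈ q.support, x ∈ V' := by
    intro b q hb
    by_contra h
    push_neg at h
    have hr := walk_avoid_reachable (V' := V') q h
    have : (G.induce V'ᶜ).Reachable v ⟨b, h b q.end_mem_support⟩ := by
      convert hr using 2
    exact hcon ⟨b, h b q.end_mem_support⟩ hb this
  have hvV' : (v : V) ∉ V' := v.2
  have hvM : (v : V) ∉ M := fun hm => hcon v hm (Reachable.refl _)
  rcases V'.eq_empty_or_nonempty with hemp | hne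
  · obtain ⟨m, hm⟩ := hM
    obtain ⟨q⟩ := hG.preconnected (v : V) m
    obtain ⟨x, -, hxV'⟩ := key m q hm
    simp [hemp] at hxV'
  · -- choose u ∈ V' such that every monitor of V' equals u
    obtain ⟨u, huV, huM⟩ : ∃ u ∈ V', ∀ x ∈ V', x ∈ M → x = u := by
      rcases (V' ∩ M).eq_empty_or_nonempty with he | ⟨u, hu⟩
      · obtain ⟨u, hu⟩ := hne
        exact ⟨u, hu, fun x hx hxM =>
          absurd (Set.mem_inter hx hxM) (by simp [he])⟩
      · refine ⟨u, hu.1, fun x hx hxM => ?_⟩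
        exact (Set.ncard_le_one (Set.toFinite _)).1 hcap x ⟨hx, hxM⟩ u hu
    set A : Set V := V' \ {u} with hA
    have hAM : A ⊆ Mᶜ := by
      rintro x ⟨hxV, hxu⟩ hxM
      exact hxu (huM x hxV hxM)
    have hvA : (v : V) ∉ A := fun hx => hvV' hx.1
    have hcard1 : 1 ≤ V'.ncard := (Set.ncard_pos (Set.toFinite _)).2 hne
    have hAcard : A.ncard = V'.ncard - 1 :=
      Set.ncard_diff_singleton_of_mem huV
    have hAle : A.ncard ≤ k := by omega
    have hFle : (insert (v : V) A).ncard ≤ k := by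
      have := Set.ncard_insert_le (v : V) A
      omega
    have hd := hid A (insert (v : V) A) hAM
      (Set.insert_subset hvM hAM) hAle hFle
      (fun hEq => hvA (hEq ▸ Set.mem_insert _ _))
    rcases hd with ⟨p, _, ⟨x, hxA, hxt⟩, havoid⟩ | ⟨p, hp, ⟨x, hx, hxt⟩, havoid⟩
    · exact havoid x (Set.mem_insert_of_mem _ hxA) hxt
    · obtain ⟨hm1, hm2, -, hpath⟩ := hp
      have hxv : x = (v : V) := by
        rcases hx with h | h
        · exact h
        · exact absurd hxt (havoid x h)
      set w := p.2.2 with hw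
      have hvsupp : (v : V) ∈ w.support := hxv ▸ hxt
      -- split the walk at v
      have hspec := w.take_spec hvsupp
      have hsupp : w.support =
          (w.takeUntil _ hvsupp).support ++ (w.dropUntil _ hvsupp).support.tail := by
        conv_lhs => rw [← hspec]
        exact Walk.support_append _ _
      have hseg1 := key p.1 ((w.takeUntil _ hvsupp).reverse.copy rfl rfl) hm1
      obtain ⟨x₁, hx₁s, hx₁V⟩ := hseg1
      rw [Walk.support_copy, Walk.support_reverse, List.mem_reverse] at hx₁s
      obtain ⟨x₂, hx₂s, hx₂V⟩ := key p.2.1 ((w.dropUntil _ hvsupp).copy rfl rfl) hm2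
      rw [Walk.support_copy] at hx₂s
      have hx₂t : x₂ ∈ (w.dropUntil _ hvsupp).support.tail := by
        rcases List.mem_cons.1 (by rw [Walk.support_eq_cons (w.dropUntil _ hvsupp)] at hx₂s; exact hx₂s :
            x₂ ∈ (v : V) :: (w.dropUntil _ hvsupp).support.tail) with h | h
        · exact absurd (h ▸ hx₂V) hvV'
        · exact h
      have hnodup : w.support.Nodup := hpath.support_nodup
      rw [hsupp] at hnodup
      have hdisj := List.disjoint_of_nodup_append hnodup
      have hne12 : x₁ ≠ x₂ := fun hEq => hdisj hx₁s (hEq ▸ hx₂t)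
      -- one of x₁ x₂ avoids u, hence lies in A and on w
      by_cases h1 : x₁ = u
      · have hx₂A : x₂ ∈ A := ⟨hx₂V, fun h2 => hne12 (h1.trans (Set.mem_singleton_iff.1 h2).symm)⟩
        have : x₂ ∈ w.support := by rw [hsupp]; exact List.mem_append_right _ hx₂t
        exact havoid x₂ hx₂A this
      · have hx₁A : x₁ ∈ A := ⟨hx₁V, h1⟩
        have : x₁ ∈ w.support := Walk.support_takeUntil_subset w hvsupp hx₁s
        exact havoid x₁ hx₁A this
end

section
/- Suppose σ ≥ 1. G is (σ−1)-identifiable under CSP if and only if at most one non-monitor has fewer than two monitor neighbors, and, if such a non-monitor v exists, then v is adjacent in G to exactly one monitor and to every other non-monitor (i.e., to all nodes of N \ {v}). -/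
open SimpleGraph

section Aux

variable {V : Type*} [Fintype V] {G : SimpleGraph V}

/-- The first edge of a nontrivial walk. -/
lemma firstEdge {v a : V} (w : G.Walk v a) (h : v ≠ a) :
    ∃ x, G.Adj v x ∧ x ∈ w.support.tail := by
  cases w with
  | nil => exact absurd rfl h
  | cons hadj q => exact ⟨_, hadj, by simpa using q.start_mem_support⟩

/-- An internal vertex of a path has two distinct neighbours on the path. -/
lemma core_two_nbrs {a b v : V} (p : G.Walk a b) (hp : p.IsPath) (hv : v ∈ p.support)
    (hva : v ≠ a) (hvb : v ≠ b) :
    ∃ x y, x ≠ y ∧ G.Adj v x ∧ G.Adj v y ∧ x ∈ p.support ∧ y ∈ p.support := by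
  classical
  obtain ⟨x, hxadj, hxmem⟩ := firstEdge (p.takeUntil v hv).reverse (fun h => hva h)
  obtain ⟨y, hyadj, hymem⟩ := firstEdge (p.dropUntil v hv) hvb
  have hxmem' : x ∈ (p.takeUntil v hv).support := by
    have := List.mem_of_mem_tail hxmem
    rwa [SimpleGraph.Walk.support_reverse, List.mem_reverse] at this
  have hnodup : ((p.takeUntil v hv).support ++ (p.dropUntil v hv).support.tail).Nodup := by
    have h2 := hp.support_nodup
    rw [← SimpleGraph.Walk.take_spec p hv, SimpleGraph.Walk.support_append] at h2
    exact h2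
  have hdisj := List.disjoint_of_nodup_append hnodup
  refine ⟨x, y, ?_, hxadj, hyadj, ?_, ?_⟩
  · intro hxy; exact hdisj hxmem' (hxy ▸ hymem)
  · rw [← SimpleGraph.Walk.take_spec p hv, SimpleGraph.Walk.support_append]
    exact List.mem_append_left _ hxmem'
  · rw [← SimpleGraph.Walk.take_spec p hv, SimpleGraph.Walk.support_append]
    exact List.mem_append_right _ hymem

/-- A non-monitor traversed by a CSP path has two distinct neighbours on the path. -/
lemma nbrs_of_path {M : Set V} {p : MWalk G} (hp : p ∈ CSP G M) {v : V}
    (hv : v ∉ M) (ht : Traverses p v) :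
    ∃ x y, x ≠ y ∧ G.Adj v x ∧ G.Adj v y ∧ Traverses p x ∧ Traverses p y := by
  obtain ⟨hm1, hm2, hne, hpath⟩ := hp
  exact core_two_nbrs p.2.2 hpath ht (fun h => hv (h ▸ hm1)) (fun h => hv (h ▸ hm2))

/-- If a CSP path traverses `w`, the only non-monitor it traverses, then `w`
has two distinct monitor neighbours. -/
lemma forceTwo {M : Set V} {p : MWalk G} (hp : p ∈ CSP G M) {w : V} (hw : w ∉ M)
    (ht : Traverses p w) (hav : ∀ x, Traverses p x → x ∉ M → x = w) :
    1 < {m ∈ M | G.Adj w m}.ncard := by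
  obtain ⟨x, y, hxy, hax, hay, htx, hty⟩ := nbrs_of_path hp hw ht
  have hxM : x ∈ M := by by_contra h; exact hax.ne' (hav x htx h)
  have hyM : y ∈ M := by by_contra h; exact hay.ne' (hav y hty h)
  exact (Set.one_lt_ncard_iff (Set.toFinite _)).mpr ⟨x, y, ⟨hxM, hax⟩, ⟨hyM, hay⟩, hxy⟩

/-- If a CSP path traverses `v`, the only non-monitors it traverses are among
`{v, u}`, and `v` has fewer than two monitor neighbours, then `v` is adjacent
to `u` and to some monitor. -/
lemma forceAdj {M : Set V} {p : MWalk G} (hp : p ∈ CSP G M) {v u : V} (hv : v ∉ M)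
    (hvu : v ≠ u) (ht : Traverses p v)
    (hav : ∀ x, Traverses p x → x ∉ M → x = v ∨ x = u)
    (hlt : {m ∈ M | G.Adj v m}.ncard < 2) :
    G.Adj v u ∧ ∃ m ∈ M, G.Adj v m := by
  obtain ⟨x, y, hxy, hax, hay, htx, hty⟩ := nbrs_of_path hp hv ht
  have hx : x ∈ M ∨ x = u := by
    by_cases h : x ∈ M
    · exact Or.inl h
    · rcases hav x htx h with h' | h'
      · exact absurd h' hax.ne'
      · exact Or.inr h'
  have hy : y ∈ M ∨ y = u := by
    by_cases h : y ∈ M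
    · exact Or.inl h
    · rcases hav y hty h with h' | h'
      · exact absurd h' hay.ne'
      · exact Or.inr h'
  rcases hx with hxM | rfl
  · rcases hy with hyM | rfl
    · exfalso
      have : 1 < {m ∈ M | G.Adj v m}.ncard :=
        (Set.one_lt_ncard_iff (Set.toFinite _)).mpr ⟨x, y, ⟨hxM, hax⟩, ⟨hyM, hay⟩, hxy⟩
      omega
    · exact ⟨hay, x, hxM, hax⟩
  · have hyM : y ∈ M := by
      rcases hy with h | rfl
      · exact h
      · exact absurd rfl hxy
    exact ⟨hax, y, hyM, hay⟩

/-- The three-vertex CSP path `m₁ – v – m₂`. -/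
lemma path3_mem {M : Set V} {m₁ v m₂ : V} (hm₁ : m₁ ∈ M) (hm₂ : m₂ ∈ M)
    (hv : v ∉ M) (h1 : G.Adj m₁ v) (h2 : G.Adj v m₂) (hne : m₁ ≠ m₂) :
    ∃ p ∈ CSP G M, ∀ x, Traverses p x ↔ x = m₁ ∨ x = v ∨ x = m₂ := by
  have h1v : m₁ ≠ v := fun h => hv (h ▸ hm₁)
  have h2v : v ≠ m₂ := fun h => hv (h ▸ hm₂)
  refine ⟨⟨m₁, m₂, .cons h1 (.cons h2 .nil)⟩, ⟨hm₁, hm₂, hne, ?_⟩, ?_⟩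
  · rw [SimpleGraph.Walk.isPath_def]
    simp [h1v, h2v, hne]
  · intro x
    simp [Traverses]

/-- The four-vertex CSP path `m₀ – v – u – m`. -/
lemma path4_mem {M : Set V} {m₀ v u m : V} (hm₀ : m₀ ∈ M) (hm : m ∈ M)
    (hv : v ∉ M) (hu : u ∉ M) (hvu : v ≠ u) (hmm : m₀ ≠ m)
    (h1 : G.Adj m₀ v) (h2 : G.Adj v u) (h3 : G.Adj u m) :
    ∃ p ∈ CSP G M, ∀ x, Traverses p x ↔ x = m₀ ∨ x = v ∨ x = u ∨ x = m := by
  have e1 : m₀ ≠ v := fun h => hv (h ▸ hm₀)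
  have e2 : m₀ ≠ u := fun h => hu (h ▸ hm₀)
  have e3 : v ≠ m := fun h => hv (h ▸ hm)
  have e4 : u ≠ m := fun h => hu (h ▸ hm)
  refine ⟨⟨m₀, m, .cons h1 (.cons h2 (.cons h3 .nil))⟩, ⟨hm₀, hm, hmm, ?_⟩, ?_⟩
  · rw [SimpleGraph.Walk.isPath_def]
    simp [e1, e2, e3, e4, hvu, hmm]
  · intro x
    simp [Traverses]

end Aux

/-- For `σ ≥ 1`: `G` is `(σ−1)`-identifiable under CSP iff at most one
non-monitor has fewer than two monitor neighbors, and if such a non-monitor `v`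
exists, then `v` has exactly one monitor neighbor and is adjacent to every
other non-monitor. -/
theorem stmt_10 {V : Type*} [Fintype V] (G : SimpleGraph V) (hG : G.Connected)
    (M : Set V) (hM : M.Nonempty) (hσ : 1 ≤ Mᶜ.ncard) :
    Identifiable (CSP G M) Mᶜ (Mᶜ.ncard - 1) ↔
      ((∀ u ∈ Mᶜ, ∀ w ∈ Mᶜ, { m ∈ M | G.Adj u m }.ncard < 2 →
          { m ∈ M | G.Adj w m }.ncard < 2 → u = w) ∧
        ∀ v ∈ Mᶜ, { m ∈ M | G.Adj v m }.ncard < 2 →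
          { m ∈ M | G.Adj v m }.ncard = 1 ∧ ∀ u ∈ Mᶜ, u ≠ v → G.Adj v u) := by
  classical
  constructor
  · -- forward direction
    intro hid
    -- the key per-pair consequence of identifiability
    have key : ∀ v ∈ Mᶜ, ∀ u ∈ Mᶜ, u ≠ v → {m ∈ M | G.Adj v m}.ncard < 2 →
        G.Adj v u ∧ ∃ m ∈ M, G.Adj v m := by
      intro v hv u hu huv hlt
      have hF'card : (Mᶜ \ {u}).ncard = Mᶜ.ncard - 1 :=
        Set.ncard_diff_singleton_of_mem hu
      have hsub : Mᶜ \ {v, u} ⊆ Mᶜ \ {u} := by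
        intro x hx
        exact ⟨hx.1, fun h => hx.2 (by simp at h; simp [h])⟩
      have hFcard : (Mᶜ \ {v, u}).ncard ≤ Mᶜ.ncard - 1 := by
        rw [← hF'card]; exact Set.ncard_le_ncard hsub (Set.toFinite _)
      have hneq : (Mᶜ \ {v, u} : Set V) ≠ Mᶜ \ {u} := by
        intro h
        have hvmem : v ∈ Mᶜ \ {u} := ⟨hv, by simp [Ne.symm huv]⟩
        rw [← h] at hvmem
        exact hvmem.2 (by simp)
      have hdist := hid (Mᶜ \ {v, u}) (Mᶜ \ {u}) Set.diff_subset Set.diff_subset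
        hFcard hF'card.le hneq
      rcases hdist with ⟨p, hp, ⟨z, hz, hzt⟩, hav⟩ | ⟨p, hp, ⟨z, hz, hzt⟩, hav⟩
      · exact absurd hzt (hav z ⟨hz.1, fun h => hz.2 (by simp at h; simp [h])⟩)
      · have hzv : z = v := by
          by_contra hzv
          have hzu : z ≠ u := by simpa using hz.2
          exact hav z ⟨hz.1, by simp [hzv, hzu]⟩ hzt
        subst hzv
        refine forceAdj hp hv (Ne.symm huv) hzt ?_ hlt
        intro x htx hxM
        by_contra hx
        push_neg at hx
        exact hav x ⟨hxM, by simp [hx.1, hx.2]⟩ htx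
    refine ⟨?_, ?_⟩
    · -- at most one non-monitor with fewer than two monitor neighbours
      intro u hu w hw h1 h2
      by_contra huw
      have hFcard : (Mᶜ \ {u}).ncard = Mᶜ.ncard - 1 :=
        Set.ncard_diff_singleton_of_mem hu
      have hF'card : (Mᶜ \ {w}).ncard = Mᶜ.ncard - 1 :=
        Set.ncard_diff_singleton_of_mem hw
      have hneq : (Mᶜ \ {u} : Set V) ≠ Mᶜ \ {w} := by
        intro h
        have hwmem : w ∈ Mᶜ \ {u} := ⟨hw, by simp [Ne.symm huw]⟩
        rw [h] at hwmem
        exact hwmem.2 (by simp)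
      have hdist := hid (Mᶜ \ {u}) (Mᶜ \ {w}) Set.diff_subset Set.diff_subset
        hFcard.le hF'card.le hneq
      rcases hdist with ⟨p, hp, ⟨z, hz, hzt⟩, hav⟩ | ⟨p, hp, ⟨z, hz, hzt⟩, hav⟩
      · -- the path's only non-monitor is w : contradiction with h2
        have havw : ∀ x, Traverses p x → x ∉ M → x = w := by
          intro x htx hxM
          by_contra hx
          exact hav x ⟨hxM, by simp [hx]⟩ htx
        have hzw : z = w := havw z hzt hz.1
        subst hzw
        have := forceTwo hp hz.1 hzt havw
        omega
      · have havu : ∀ x, Traverses p x → x ∉ M → x = u := by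
          intro x htx hxM
          by_contra hx
          exact hav x ⟨hxM, by simp [hx]⟩ htx
        have hzu : z = u := havu z hzt hz.1
        subst hzu
        have := forceTwo hp hz.1 hzt havu
        omega
    · -- a deficient non-monitor has exactly one monitor neighbour and is
      -- adjacent to every other non-monitor
      intro v hv hlt
      by_cases hex : ∃ u ∈ Mᶜ, u ≠ v
      · obtain ⟨u, hu, huv⟩ := hex
        obtain ⟨-, m, hm, hadj⟩ := key v hv u hu huv hlt
        have h1 : 0 < {m ∈ M | G.Adj v m}.ncard :=
          (Set.ncard_pos (Set.toFinite _)).mpr ⟨m, hm, hadj⟩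
        exact ⟨by omega, fun u' hu' hu'v => (key v hv u' hu' hu'v hlt).1⟩
      · -- Mᶜ = {v} : use connectivity to find the monitor neighbour
        push_neg at hex
        obtain ⟨m, hm⟩ := hM
        have hvm : v ≠ m := fun h => hv (h ▸ hm)
        obtain ⟨w⟩ := hG.preconnected v m
        obtain ⟨x, hadj, -⟩ := firstEdge w hvm
        have hxM : x ∈ M := by
          by_contra hxM
          exact hadj.ne' (hex x hxM)
        have h1 : 0 < {m ∈ M | G.Adj v m}.ncard :=
          (Set.ncard_pos (Set.toFinite _)).mpr ⟨x, hxM, hadj⟩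
        refine ⟨by omega, fun u hu huv => absurd (hex u hu) huv⟩
  · -- backward direction
    rintro ⟨cond1, cond2⟩ F F' hF hF' hcF hcF' hne
    have hΔ : ∃ z, (z ∈ F ∧ z ∉ F') ∨ (z ∈ F' ∧ z ∉ F) := by
      by_contra h
      push_neg at h
      exact hne (Set.ext fun z =>
        ⟨fun hz => (h z).1 hz, fun hz => (h z).2 hz⟩)
    by_cases hbig : ∃ z, ((z ∈ F ∧ z ∉ F') ∨ (z ∈ F' ∧ z ∉ F)) ∧
        1 < {m ∈ M | G.Adj z m}.ncard
    · obtain ⟨z, hzmem, hz2⟩ := hbig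
      obtain ⟨m₁, m₂, ⟨hm₁, ha₁⟩, ⟨hm₂, ha₂⟩, hm12⟩ :=
        (Set.one_lt_ncard_iff (Set.toFinite _)).mp hz2
      have hzNm : z ∉ M := by
        rcases hzmem with ⟨h, -⟩ | ⟨h, -⟩
        · exact hF h
        · exact hF' h
      obtain ⟨p, hp, hiff⟩ := path3_mem hm₁ hm₂ hzNm ha₁.symm ha₂ hm12
      have havoid : ∀ (S : Set V), S ⊆ Mᶜ → z ∉ S → ∀ x ∈ S, ¬ Traverses p x := by
        intro S hS hzS x hxS htx
        rcases (hiff x).mp htx with rfl | rfl | rfl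
        · exact hS hxS hm₁
        · exact hzS hxS
        · exact hS hxS hm₂
      rcases hzmem with ⟨hzF, hzF'⟩ | ⟨hzF', hzF⟩
      · exact Or.inl ⟨p, hp, ⟨z, hzF, (hiff z).mpr (Or.inr (Or.inl rfl))⟩,
          havoid F' hF' hzF'⟩
      · exact Or.inr ⟨p, hp, ⟨z, hzF', (hiff z).mpr (Or.inr (Or.inl rfl))⟩,
          havoid F hF hzF⟩
    · push_neg at hbig
      obtain ⟨z₀, hz₀mem⟩ := hΔ
      have hz₀Nm : z₀ ∈ Mᶜ := by
        rcases hz₀mem with ⟨h, -⟩ | ⟨h, -⟩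
        · exact hF h
        · exact hF' h
      have hz₀lt : {m ∈ M | G.Adj z₀ m}.ncard < 2 := by
        have := hbig z₀ hz₀mem; omega
      obtain ⟨hz₀one, hz₀adj⟩ := cond2 z₀ hz₀Nm hz₀lt
      obtain ⟨m₀, hm₀set⟩ := Set.ncard_eq_one.mp hz₀one
      have hm₀ : m₀ ∈ M ∧ G.Adj z₀ m₀ := by
        have : m₀ ∈ {m ∈ M | G.Adj z₀ m} := by rw [hm₀set]; rfl
        exact this
      have main : ∀ A B : Set V, A ⊆ Mᶜ → B ⊆ Mᶜ → B.ncard ≤ Mᶜ.ncard - 1 →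
          z₀ ∈ B → z₀ ∉ A → (∀ x ∈ A, x ∉ B → x = z₀) →
          ∃ p ∈ CSP G M, (∃ x ∈ B, Traverses p x) ∧ ∀ x ∈ A, ¬ Traverses p x := by
        intro A B hA hB hBc hz₀B hz₀A hAsub
        have hBne : B ≠ Mᶜ := by
          intro h
          rw [h] at hBc
          omega
        have hu : ∃ u ∈ Mᶜ, u ∉ B := by
          by_contra h
          push_neg at h
          exact hBne (Set.Subset.antisymm hB h)
        obtain ⟨u, hu, huB⟩ := hu
        have huz : u ≠ z₀ := fun h => huB (h ▸ hz₀B)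
        have hu2 : 1 < {m ∈ M | G.Adj u m}.ncard := by
          by_contra h
          push_neg at h
          exact huz (cond1 u hu z₀ hz₀Nm (by omega) hz₀lt)
        obtain ⟨m₁, m₂, ⟨hm₁, ha₁⟩, ⟨hm₂, ha₂⟩, hm12⟩ :=
          (Set.one_lt_ncard_iff (Set.toFinite _)).mp hu2
        obtain ⟨m, hmM, hma, hmne⟩ : ∃ m, m ∈ M ∧ G.Adj u m ∧ m₀ ≠ m := by
          by_cases h : m₁ = m₀
          · exact ⟨m₂, hm₂, ha₂, fun hh => hm12 (h.trans hh)⟩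
          · exact ⟨m₁, hm₁, ha₁, fun hh => h hh.symm⟩
        obtain ⟨p, hp, hiff⟩ := path4_mem hm₀.1 hmM hz₀Nm hu huz.symm hmne
          hm₀.2.symm (hz₀adj u hu huz) hma
        refine ⟨p, hp, ⟨z₀, hz₀B, (hiff z₀).mpr (Or.inr (Or.inl rfl))⟩, ?_⟩
        intro x hxA htx
        rcases (hiff x).mp htx with rfl | rfl | rfl | rfl
        · exact hA hxA hm₀.1
        · exact hz₀A hxA
        · exact huz (hAsub _ hxA huB)
        · exact hA hxA hmM
      rcases hz₀mem with ⟨hzF, hzF'⟩ | ⟨hzF', hzF⟩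
      · refine Or.inl (main F' F hF' hF hcF hzF hzF' ?_)
        intro x hxF' hxF
        have h1 := hbig x (Or.inr ⟨hxF', hxF⟩)
        exact cond1 x (hF' hxF') z₀ hz₀Nm (by omega) hz₀lt
      · refine Or.inr (main F F' hF hF' hcF' hzF' hzF ?_)
        intro x hxF hxF'
        have h1 := hbig x (Or.inl ⟨hxF, hxF'⟩)
        exact cond1 x (hF hxF) z₀ hz₀Nm (by omega) hz₀lt
end

section
/- Under UP with a given set P of measurement paths: if MSC(v) > k for every non-monitor v ∈ N (in particular, if no set of at most k other non-monitors covers P_v), then G is k-identifiable with respect to P. -/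
open SimpleGraph

/-- Sufficient condition for `k`-identifiability under UP: `MSC(v) > k` for
every non-monitor `v`. -/
theorem stmt_11 {V : Type*} [Fintype V] (G : SimpleGraph V) (hG : G.Connected)
    (M : Set V) (hM : M.Nonempty) (P : Set (MWalk G))
    (hP : ∀ p ∈ P, p.1 ∈ M ∧ p.2.1 ∈ M ∧ p.2.2.IsPath) (k : ℕ)
    (h : ∀ v ∈ Mᶜ, (k : ℕ∞) < MSC P Mᶜ v) :
    Identifiable P Mᶜ k := by
  intro F F' hF hF' hFk hF'k hne
  have key : ∀ (A B : Set V), A ⊆ Mᶜ → B ⊆ Mᶜ → B.ncard ≤ k →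
      ∀ v ∈ A, v ∉ B →
      ∃ p ∈ P, (∃ x ∈ A, Traverses p x) ∧ ∀ x ∈ B, ¬ Traverses p x := by
    intro A B hA hB hBk v hvA hvB
    have hv := h v (hA hvA)
    by_contra hc
    push_neg at hc
    have hcov : ∀ p ∈ P, Traverses p v → ∃ x ∈ B, Traverses p x := by
      intro p hp hpv
      exact hc p hp ⟨v, hvA, hpv⟩
    have hmem : (B.ncard : ℕ∞) ∈ { n : ℕ∞ | ∃ V' : Set V, V' ⊆ Mᶜ \ {v} ∧
        (∀ p ∈ P, Traverses p v → ∃ x ∈ V', Traverses p x) ∧ n = (V'.ncard : ℕ∞) } :=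
      ⟨B, fun x hx => ⟨hB hx, fun hxv => hvB (Set.mem_singleton_iff.mp hxv ▸ hx)⟩, hcov, rfl⟩
    have hle : MSC P Mᶜ v ≤ (B.ncard : ℕ∞) := sInf_le hmem
    have : (k : ℕ∞) < (B.ncard : ℕ∞) := lt_of_lt_of_le hv hle
    exact absurd (Nat.cast_le.mpr hBk : (B.ncard : ℕ∞) ≤ (k : ℕ∞)) (not_le.mpr this)
  by_cases hsub : F ⊆ F'
  · obtain ⟨v, hv1, hv2⟩ := Set.not_subset.mp (fun h' => hne (le_antisymm hsub h'))
    exact Or.inr (key F' F hF' hF hFk v hv1 hv2)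
  · obtain ⟨v, hv1, hv2⟩ := Set.not_subset.mp hsub
    exact Or.inl (key F F' hF hF' hF'k v hv1 hv2)
end

section
/- Let k be an integer with k ≤ σ − 1. If the auxiliary graph G* is (k+1)-vertex-connected, then G is k-identifiable under CAP. -/
open SimpleGraph

lemma cap_main_lemma {V : Type*} [Fintype V] (G : SimpleGraph V)
    (M : Set V) (k : ℕ)
    (h : KConnected (StarGraph G Mᶜ M) (k + 1))
    (F' : Set V) (hF' : F' ⊆ Mᶜ) (hcard : F'.ncard ≤ k)
    (v : V) (hv : v ∈ Mᶜ) (hvF : v ∉ F') :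
    ∃ p ∈ CAP G M, Traverses p v ∧ ∀ x ∈ F', ¬ Traverses p x := by
  classical
  set S : Set (Option ↥(Mᶜ : Set V)) :=
    (fun u : ↥(Mᶜ : Set V) => (some u : Option ↥(Mᶜ : Set V))) '' (Subtype.val ⁻¹' F') with hSdef
  have hScard : S.ncard < k + 1 := by
    have h1 : S.ncard = (Subtype.val ⁻¹' F' : Set ↥(Mᶜ : Set V)).ncard :=
      Set.ncard_image_of_injective _ (Option.some_injective _)
    have h2 : (Subtype.val ⁻¹' F' : Set ↥(Mᶜ : Set V)).ncard ≤ F'.ncard := by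
      rw [← Set.ncard_image_of_injective (Subtype.val ⁻¹' F' : Set ↥(Mᶜ : Set V))
        Subtype.val_injective]
      exact Set.ncard_le_ncard (Set.image_preimage_subset _ _) (Set.toFinite _)
    omega
  have hconn := h.2 S hScard
  have hnone : (none : Option ↥(Mᶜ : Set V)) ∈ Sᶜ := by
    intro hmem
    obtain ⟨u, -, hu⟩ := hmem
    exact Option.some_ne_none _ hu
  have hsv : (some ⟨v, hv⟩ : Option ↥(Mᶜ : Set V)) ∈ Sᶜ := by
    intro hmem
    obtain ⟨u, hu1, hu2⟩ := hmem
    have : (u : V) = v := congrArg (fun o => Option.getD (Option.map Subtype.val o) v)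
      hu2
    exact hvF (this ▸ hu1)
  -- non-monitors are not in F'
  have hMnot : ∀ m ∈ M, m ∉ F' := fun m hm hmF => (hF' hmF) hm
  have key : ∀ (a b : ↥Sᶜ), ((StarGraph G Mᶜ M).induce Sᶜ).Walk a b → b.val = none →
      ∀ (u : ↥(Mᶜ : Set V)), a.val = some u → (u : V) ∉ F' →
      ∃ (m : V) (q : G.Walk (u : V) m), m ∈ M ∧ ∀ x ∈ q.support, x ∉ F' := by
    intro a b w
    induction w with
    | nil =>
      intro hb u hu _
      rw [hb] at hu
      exact absurd hu.symm (Option.some_ne_none _)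
    | @cons a c _ hadj w ih =>
      intro hb u hu huF
      have ih := ih hb
      obtain ⟨cv, hcmem⟩ := c
      have hadj' : (StarGraph G Mᶜ M).Adj a.val cv := hadj
      rw [hu] at hadj'
      match cv, hadj', hcmem, ih with
      | none, hadj', hcmem, ih =>
        obtain ⟨m, hm, hadjm⟩ := hadj'
        refine ⟨m, SimpleGraph.Walk.cons hadjm SimpleGraph.Walk.nil, hm, ?_⟩
        intro x hx
        simp only [SimpleGraph.Walk.support_cons, SimpleGraph.Walk.support_nil,
          List.mem_cons, List.mem_singleton] at hx
        rcases hx with rfl | hx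
        · exact huF
        · simp at hx
          rw [hx]
          exact hMnot m hm
      | some wv, hadj', hcmem, ih =>
        have hwF : (wv : V) ∉ F' := by
          intro hmem
          exact hcmem ⟨wv, hmem, rfl⟩
        obtain ⟨hne, hor⟩ := hadj'
        rcases hor with hGadj | ⟨⟨m, hm, hadjm⟩, -⟩
        · obtain ⟨m, q, hmM, hq⟩ := ih wv rfl hwF
          refine ⟨m, SimpleGraph.Walk.cons hGadj q, hmM, ?_⟩
          intro x hx
          simp only [SimpleGraph.Walk.support_cons, List.mem_cons] at hx
          rcases hx with rfl | hx
          · exact huF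
          · exact hq x hx
        · refine ⟨m, SimpleGraph.Walk.cons hadjm SimpleGraph.Walk.nil, hm, ?_⟩
          intro x hx
          simp only [SimpleGraph.Walk.support_cons, SimpleGraph.Walk.support_nil,
            List.mem_cons, List.mem_singleton] at hx
          rcases hx with rfl | hx
          · exact huF
          · simp at hx
            rw [hx]
            exact hMnot m hm
  obtain ⟨w⟩ := hconn.preconnected ⟨some ⟨v, hv⟩, hsv⟩ ⟨none, hnone⟩
  obtain ⟨m, q, hmM, hq⟩ := key ⟨some ⟨v, hv⟩, hsv⟩ ⟨none, hnone⟩ w rfl ⟨v, hv⟩ rfl hvF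
  refine ⟨⟨m, m, q.reverse.append q⟩, ⟨hmM, hmM⟩, ?_, ?_⟩
  · show v ∈ _
    rw [SimpleGraph.Walk.mem_support_append_iff]
    exact Or.inr q.start_mem_support
  · intro x hx hxT
    have hxs : x ∈ q.support := by
      rcases (SimpleGraph.Walk.mem_support_append_iff _ _).mp hxT with hx1 | hx1
      · rw [SimpleGraph.Walk.support_reverse, List.mem_reverse] at hx1
        exact hx1
      · exact hx1
    exact hq x hxs hx

/-- If `k ≤ σ − 1` and the auxiliary graph `G*` is `(k+1)`-vertex-connected,
then `G` is `k`-identifiable under CAP. -/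
theorem stmt_13 {V : Type*} [Fintype V] (G : SimpleGraph V) (hG : G.Connected)
    (M : Set V) (hM : M.Nonempty) (k : ℕ) (hk : k + 1 ≤ Mᶜ.ncard)
    (h : KConnected (StarGraph G Mᶜ M) (k + 1)) :
    Identifiable (CAP G M) Mᶜ k := by
  intro F F' hF hF' hFc hF'c hne
  have hcases : ¬ (F ⊆ F') ∨ ¬ (F' ⊆ F) := by
    by_contra hc
    push_neg at hc
    exact hne (Set.Subset.antisymm hc.1 hc.2)
  rcases hcases with hc | hc
  · obtain ⟨v, hvF, hvF'⟩ := Set.not_subset.mp hc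
    obtain ⟨p, hp, hT, hN⟩ := cap_main_lemma G M k h F' hF' hF'c v (hF hvF) hvF'
    exact Or.inl ⟨p, hp, ⟨v, hvF, hT⟩, hN⟩
  · obtain ⟨v, hvF', hvF⟩ := Set.not_subset.mp hc
    obtain ⟨p, hp, hT, hN⟩ := cap_main_lemma G M k h F hF hFc v (hF' hvF') hvF
    exact Or.inr ⟨p, hp, ⟨v, hvF', hT⟩, hN⟩
end

section
/- Let k be an integer with 1 ≤ k ≤ σ. If G is k-identifiable under CAP, then the auxiliary graph G* is k-vertex-connected. -/
open SimpleGraph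

/-- If `1 ≤ k ≤ σ` and `G` is `k`-identifiable under CAP, then the auxiliary
graph `G*` is `k`-vertex-connected. -/
theorem stmt_14 {V : Type*} [Fintype V] (G : SimpleGraph V) (hG : G.Connected)
    (M : Set V) (hM : M.Nonempty) (k : ℕ) (hk1 : 1 ≤ k) (hk : k ≤ Mᶜ.ncard)
    (hid : Identifiable (CAP G M) Mᶜ k) :
    KConnected (StarGraph G Mᶜ M) k := by
  classical
  have hcard : Nat.card (Option ↥Mᶜ) = Mᶜ.ncard + 1 := by
    rw [Finite.card_option, Nat.card_coe_set_eq]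
  refine ⟨by omega, ?_⟩
  intro S hS
  set H := StarGraph G Mᶜ M with hHdef
  by_contra hcon
  -- the complement of S is nonempty
  have hne : Sᶜ.Nonempty := by
    rw [Set.nonempty_compl]
    intro h
    rw [h, Set.ncard_univ, hcard] at hS
    omega
  rw [SimpleGraph.connected_iff] at hcon
  push_neg at hcon
  have hnp : ¬ (H.induce Sᶜ).Preconnected := fun hp =>
    @IsEmpty.false _ (hcon hp) ⟨hne.some, hne.some_mem⟩
  rw [SimpleGraph.Preconnected] at hnp
  push_neg at hnp
  obtain ⟨a, b, hab⟩ := hnp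
  -- "quasi-monitor" vertices: the virtual monitor or non-monitors adjacent to a monitor
  set Qp : ↥Sᶜ → Prop := fun x => x.val = none ∨
    ∃ u : ↥Mᶜ, x.val = some u ∧ ∃ m ∈ M, G.Adj (u : V) m with hQp
  -- any two quasi-monitor vertices are connected in the induced graph
  have clique : ∀ x y : ↥Sᶜ, Qp x → Qp y → (H.induce Sᶜ).Reachable x y := by
    intro x y hx hy
    rcases hx with hx | ⟨u, hxu, mu, hmu, hadju⟩
    · rcases hy with hy | ⟨w, hyw, mw, hmw, hadjw⟩
      · exact (Subtype.ext (hx.trans hy.symm) : x = y) ▸ SimpleGraph.Reachable.refl x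
      · apply SimpleGraph.Adj.reachable
        show H.Adj x.val y.val
        rw [hx, hyw]
        exact ⟨mw, hmw, hadjw⟩
    · rcases hy with hy | ⟨w, hyw, mw, hmw, hadjw⟩
      · apply SimpleGraph.Adj.reachable
        show H.Adj x.val y.val
        rw [hy, hxu]
        exact ⟨mu, hmu, hadju⟩
      · by_cases huw : (u : V) = (w : V)
        · have : x = y := Subtype.ext (by rw [hxu, hyw, Subtype.ext huw])
          exact this ▸ SimpleGraph.Reachable.refl x
        · apply SimpleGraph.Adj.reachable
          show H.Adj x.val y.val
          rw [hxu, hyw]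
          exact ⟨huw, Or.inr ⟨⟨mu, hmu, hadju⟩, ⟨mw, hmw, hadjw⟩⟩⟩
  -- there is a vertex not reachable from any quasi-monitor vertex
  have hcex : ∃ c : ↥Sᶜ, ∀ q : ↥Sᶜ, Qp q → ¬ (H.induce Sᶜ).Reachable q c := by
    by_contra hcc
    push_neg at hcc
    obtain ⟨qa, hqa, hra⟩ := hcc a
    obtain ⟨qb, hqb, hrb⟩ := hcc b
    exact hab (hra.symm.trans ((clique qa qb hqa hqb).trans hrb))
  obtain ⟨c, hc⟩ := hcex
  -- c is not the virtual monitor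
  have hcv : ∃ v : ↥Mᶜ, c.val = some v := by
    rcases hcval : c.val with _ | v
    · exact absurd (SimpleGraph.Reachable.refl c) (hc c (Or.inl hcval))
    · exact ⟨v, rfl⟩
  obtain ⟨v, hv⟩ := hcv
  -- the projection of S to V
  set S'' : Set V := {u | ∃ h : u ∈ Mᶜ, (some ⟨u, h⟩ : Option ↥Mᶜ) ∈ S} with hS''
  -- key lemma: any walk from a vertex in c's component to a monitor hits S''
  have key : ∀ (u mm : V) (w : G.Walk u mm), mm ∈ M →
      ∀ (hu : u ∈ Mᶜ) (hus : (some ⟨u, hu⟩ : Option ↥Mᶜ) ∈ Sᶜ),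
      (H.induce Sᶜ).Reachable ⟨some ⟨u, hu⟩, hus⟩ c →
      ∃ x ∈ w.support, x ∈ S'' := by
    intro u mm w
    induction w with
    | nil =>
      intro hmm hu _ _
      exact absurd hmm hu
    | @cons x y z h w' ih =>
      intro hmm hu hus hr
      by_cases hbM : y ∈ M
      · exact absurd hr (hc ⟨some ⟨x, hu⟩, hus⟩ (Or.inr ⟨⟨x, hu⟩, rfl, y, hbM, h⟩))
      · by_cases hbS : (some ⟨y, hbM⟩ : Option ↥Mᶜ) ∈ S
        · exact ⟨y, by simp [SimpleGraph.Walk.support_cons], ⟨hbM, hbS⟩⟩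
        · have hbSc : (some ⟨y, hbM⟩ : Option ↥Mᶜ) ∈ Sᶜ := hbS
          have hadj : (H.induce Sᶜ).Adj ⟨some ⟨x, hu⟩, hus⟩ ⟨some ⟨y, hbM⟩, hbSc⟩ := by
            show H.Adj (some ⟨x, hu⟩) (some ⟨y, hbM⟩)
            exact ⟨h.ne, Or.inl h⟩
          obtain ⟨zz, hzz, hzz2⟩ := ih hmm hbM hbSc (hadj.symm.reachable.trans hr)
          exact ⟨zz, by simp [SimpleGraph.Walk.support_cons, hzz], hzz2⟩
  -- v itself is not in S''
  have hvS : (v : V) ∉ S'' := by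
    rintro ⟨h', hmem⟩
    have heq : (some ⟨(v : V), h'⟩ : Option ↥Mᶜ) = c.val := by
      rw [hv]
    exact c.2 (heq ▸ hmem)
  -- |S''| ≤ |S|
  have hS''card : S''.ncard ≤ S.ncard := by
    have h1 : S'' = Subtype.val '' {x : ↥Mᶜ | (some x : Option ↥Mᶜ) ∈ S} := by
      ext u
      constructor
      · rintro ⟨h, hs⟩; exact ⟨⟨u, h⟩, hs, rfl⟩
      · rintro ⟨⟨u', h'⟩, hs, rfl⟩; exact ⟨h', hs⟩
    have h2 : (some '' {x : ↥Mᶜ | (some x : Option ↥Mᶜ) ∈ S} : Set (Option ↥Mᶜ)) ⊆ S := by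
      rintro _ ⟨x, hx, rfl⟩; exact hx
    calc S''.ncard = {x : ↥Mᶜ | (some x : Option ↥Mᶜ) ∈ S}.ncard := by
          rw [h1, Set.ncard_image_of_injective _ Subtype.val_injective]
      _ = (some '' {x : ↥Mᶜ | (some x : Option ↥Mᶜ) ∈ S}).ncard := by
          rw [Set.ncard_image_of_injective _ (Option.some_injective _)]
      _ ≤ S.ncard := Set.ncard_le_ncard h2 S.toFinite
  -- apply identifiability to F = S'' ∪ {v} and F' = S''
  have hsub2 : S'' ⊆ Mᶜ := fun u hu => hu.1
  have hsome_v : (some v : Option ↥Mᶜ) ∈ Sᶜ := hv ▸ c.2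
  have hdist := hid (insert (v : V) S'') S''
    (Set.insert_subset v.2 hsub2) hsub2
    (le_trans (Set.ncard_insert_le _ _) (by omega))
    (by omega)
    (fun hFF => hvS (hFF ▸ Set.mem_insert _ _))
  -- derive the contradiction
  have hvhits : ∀ p ∈ CAP G M, Traverses p (v : V) → ∃ x ∈ S'', Traverses p x := by
    intro p hp htr
    have hr0 : (H.induce Sᶜ).Reachable ⟨some ⟨(v : V), v.2⟩, hsome_v⟩ c := by
      have : (⟨some ⟨(v : V), v.2⟩, hsome_v⟩ : ↥Sᶜ) = c := Subtype.ext (by rw [hv])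
      rw [this]
    obtain ⟨z, hzsup, hzS''⟩ :=
      key (v : V) p.2.1 (p.2.2.dropUntil (v : V) htr) hp.2 v.2 hsome_v hr0
    exact ⟨z, hzS'', SimpleGraph.Walk.support_dropUntil_subset _ _ hzsup⟩
  rcases hdist with ⟨p, hp, ⟨x, hxF, hxtrav⟩, havoid⟩ | ⟨p, hp, ⟨x, hxF', hxtrav⟩, havoid⟩
  · rcases Set.mem_insert_iff.mp hxF with hxv | hxS
    · subst hxv
      obtain ⟨z, hzS'', hztrav⟩ := hvhits p hp hxtrav
      exact havoid z hzS'' hztrav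
    · exact havoid x hxS hxtrav
  · exact havoid x (Set.mem_insert_of_mem _ hxF') hxtrav
end

section
/- If δ(G*) ≤ σ − 1, then the maximum identifiability of G under CAP satisfies δ(G*) − 1 ≤ Ω_CAP(G) ≤ δ(G*). -/
open SimpleGraph

section Aux

instance optionFinite {α : Type*} [Finite α] : Finite (Option α) := by
  have := Fintype.ofFinite α
  infer_instance

variable {V : Type*}

/-- Reachability to a monitor avoiding a set `T`. -/
def ReachM (G : SimpleGraph V) (M T : Set V) (u : V) : Prop :=
  ∃ m ∈ M, ∃ w : G.Walk m u, ∀ y ∈ w.support, y ∉ T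

/-- The set of plain vertices corresponding to a set of star-graph vertices. -/
def badOf (Nm : Set V) (S : Set (Option ↥Nm)) : Set V :=
  {v : V | ∃ h : v ∈ Nm, some (⟨v, h⟩ : ↥Nm) ∈ S}

lemma badOf_subset {Nm : Set V} {S : Set (Option ↥Nm)} : badOf Nm S ⊆ Nm :=
  fun _ hv => hv.1

lemma mem_badOf {Nm : Set V} {S : Set (Option ↥Nm)} {u : ↥Nm} :
    (u : V) ∈ badOf Nm S ↔ some u ∈ S := by
  constructor
  · rintro ⟨h, hs⟩
    exact hs
  · intro hs
    exact ⟨u.2, hs⟩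

lemma ncard_badOf_le {Nm : Set V} [Finite V] (S : Set (Option ↥Nm)) :
    (badOf Nm S).ncard ≤ S.ncard := by
  have h1 : badOf Nm S = Subtype.val '' (some ⁻¹' S : Set ↥Nm) := by
    ext v
    constructor
    · rintro ⟨h, hs⟩
      exact ⟨⟨v, h⟩, hs, rfl⟩
    · rintro ⟨x, hs, rfl⟩
      exact ⟨x.2, hs⟩
  rw [h1, Set.ncard_image_of_injective _ Subtype.val_injective]
  calc (some ⁻¹' S : Set ↥Nm).ncard
      = (some '' (some ⁻¹' S : Set ↥Nm)).ncard :=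
        (Set.ncard_image_of_injective _ (Option.some_injective _)).symm
    _ ≤ S.ncard := Set.ncard_le_ncard (Set.image_preimage_subset _ _) (Set.toFinite _)

/-- From a monitor-walk avoiding `F'` and `v ∈ F`, get distinguishability. -/
lemma reachM_left {G : SimpleGraph V} {M F F' : Set V} {v : V}
    (hv : v ∈ F) (hr : ReachM G M F' v) :
    ∃ p ∈ CAP G M, (∃ x ∈ F, Traverses p x) ∧ ∀ x ∈ F', ¬ Traverses p x := by
  obtain ⟨m, hm, w, hw⟩ := hr
  refine ⟨⟨m, m, w.append w.reverse⟩, ⟨hm, hm⟩, ⟨v, hv, ?_⟩, ?_⟩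
  · show v ∈ (w.append w.reverse).support
    rw [SimpleGraph.Walk.support_append]
    exact List.mem_append_left _ w.end_mem_support
  · intro x hx hT
    have : x ∈ (w.append w.reverse).support := hT
    rw [SimpleGraph.Walk.support_append] at this
    rcases List.mem_append.mp this with h1 | h1
    · exact hw x h1 hx
    · have := List.mem_of_mem_tail h1
      rw [SimpleGraph.Walk.support_reverse] at this
      exact hw x (List.mem_reverse.mp this) hx

/-- From a star-graph path to the virtual monitor, extract a monitor walk. -/
lemma lemA {G : SimpleGraph V} {M : Set V} {S : Set (Option ↥Mᶜ)}
    {a c : ↥Sᶜ} (p : ((StarGraph G Mᶜ M).induce Sᶜ).Walk a c)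
    (hc : (c : Option ↥Mᶜ) = none) :
    (a : Option ↥Mᶜ) = none ∨
      ∃ u : ↥Mᶜ, (a : Option ↥Mᶜ) = some u ∧ ReachM G M (badOf Mᶜ S) (u : V) := by
  revert hc
  induction p with
  | nil => exact fun hc => Or.inl hc
  | @cons a b c h q ih =>
    intro hc
    have hadj : (StarGraph G Mᶜ M).Adj (a : Option ↥Mᶜ) (b : Option ↥Mᶜ) := h
    rcases ha : (a : Option ↥Mᶜ) with _ | u
    · exact Or.inl rfl
    · refine Or.inr ⟨u, rfl, ?_⟩
      have hunb : (u : V) ∉ badOf Mᶜ S := by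
        rw [mem_badOf, ← ha]
        exact a.2
      rcases ih hc with hb | ⟨u', hb, m, hm, w, hw⟩
      · -- b is the virtual monitor: u is adjacent to a monitor
        rw [ha, hb] at hadj
        obtain ⟨m, hm, hadj'⟩ := hadj
        refine ⟨m, hm, hadj'.symm.toWalk, ?_⟩
        intro y hy
        simp only [SimpleGraph.Walk.support_cons, SimpleGraph.Walk.support_nil,
          List.mem_cons, List.mem_singleton] at hy
        rcases hy with rfl | rfl | hy
        · exact fun hbad => (badOf_subset hbad) hm
        · exact hunb
        · exact absurd hy List.not_mem_nil
      · rw [ha, hb] at hadj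
        rcases hadj.2 with hGadj | ⟨⟨m', hm', hu'⟩, _⟩
        · -- extend the walk for u' by the edge u'-u
          refine ⟨m, hm, w.concat hGadj.symm, ?_⟩
          intro y hy
          rw [SimpleGraph.Walk.support_concat] at hy
          rcases List.mem_append.mp hy with hy | hy
          · exact hw y hy
          · rw [List.mem_singleton] at hy
            subst hy
            exact hunb
        · -- u itself is adjacent to a monitor
          refine ⟨m', hm', hu'.symm.toWalk, ?_⟩
          intro y hy
          simp only [SimpleGraph.Walk.support_cons, SimpleGraph.Walk.support_nil,
            List.mem_cons, List.mem_singleton] at hy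
          rcases hy with rfl | rfl | hy
          · exact fun hbad => (badOf_subset hbad) hm'
          · exact hunb
          · exact absurd hy List.not_mem_nil

/-- From a monitor walk avoiding `badOf S`, reach a monitor-adjacent node in the
star graph without using the virtual monitor. -/
lemma lemB {G : SimpleGraph V} {M : Set V} {S : Set (Option ↥Mᶜ)}
    {x m : V} (p : G.Walk x m) :
    m ∈ M → (∀ y ∈ p.support, y ∉ badOf Mᶜ S) →
    x ∈ M ∨ ∃ (u : ↥Mᶜ) (hu : some u ∈ Sᶜ), x = (u : V) ∧
      ∃ (z : ↥Mᶜ) (hz : some z ∈ Sᶜ), (∃ m' ∈ M, G.Adj (z : V) m') ∧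
        ((StarGraph G Mᶜ M).induce Sᶜ).Reachable ⟨some u, hu⟩ ⟨some z, hz⟩ := by
  induction p with
  | nil => exact fun hm _ => Or.inl hm
  | @cons x y m h q ih =>
    intro hm hp
    by_cases hx : x ∈ M
    · exact Or.inl hx
    · have hxc : x ∈ Mᶜ := hx
      have hxnb : x ∉ badOf Mᶜ S := hp x (SimpleGraph.Walk.start_mem_support _)
      have hxS : some (⟨x, hxc⟩ : ↥Mᶜ) ∈ Sᶜ := fun hmem => hxnb ⟨hxc, hmem⟩
      have hq : ∀ y ∈ q.support, y ∉ badOf Mᶜ S := fun y hy =>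
        hp y (by rw [SimpleGraph.Walk.support_cons]; exact List.mem_cons_of_mem _ hy)
      rcases ih hm hq with hyM | ⟨u', hu', rfl, z, hz, hzadj, hreach⟩
      · -- y is a monitor: x itself is monitor-adjacent
        exact Or.inr ⟨⟨x, hxc⟩, hxS, rfl, ⟨x, hxc⟩, hxS, ⟨y, hyM, h⟩,
          SimpleGraph.Reachable.refl _⟩
      · -- y is a non-monitor with a chain to a monitor-adjacent node
        have hadj : ((StarGraph G Mᶜ M).induce Sᶜ).Adj ⟨some ⟨x, hxc⟩, hxS⟩ ⟨some u', hu'⟩ := by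
          show (StarGraph G Mᶜ M).Adj (some ⟨x, hxc⟩) (some u')
          exact ⟨h.ne, Or.inl h⟩
        exact Or.inr ⟨⟨x, hxc⟩, hxS, rfl, z, hz, hzadj, hadj.reachable.trans hreach⟩

/-- Identifiability forces monitor-reachability avoiding small cuts. -/
lemma lemC [Finite V] {G : SimpleGraph V} {M : Set V} {k : ℕ}
    (hid : Identifiable (CAP G M) Mᶜ k) {S : Set (Option ↥Mᶜ)} (hS : S.ncard < k)
    {u : ↥Mᶜ} (hu : some u ∈ Sᶜ) : ReachM G M (badOf Mᶜ S) (u : V) := by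
  classical
  by_contra hnr
  have hunb : (u : V) ∉ badOf Mᶜ S := fun hb => hu (mem_badOf.mp hb)
  have hTk : (badOf Mᶜ S).ncard < k := lt_of_le_of_lt (ncard_badOf_le S) hS
  have hins : (insert (u : V) (badOf Mᶜ S)).ncard ≤ k :=
    le_trans (Set.ncard_insert_le _ _) hTk
  have hne : badOf Mᶜ S ≠ insert (u : V) (badOf Mᶜ S) := by
    intro heq
    exact hunb (heq ▸ Set.mem_insert _ _)
  have hdist := hid (badOf Mᶜ S) (insert (u : V) (badOf Mᶜ S)) badOf_subset
    (Set.insert_subset u.2 badOf_subset) (le_of_lt hTk) hins hne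
  rcases hdist with ⟨p, _, ⟨x, hxF, hxtrav⟩, hforall⟩ |
    ⟨p, hp, ⟨x, hxF', hxtrav⟩, hforall⟩
  · exact hforall x (Set.mem_insert_of_mem _ hxF) hxtrav
  · rcases hxF' with rfl | hxF'
    · -- x = u : extract the prefix walk to u
      have hmem : (u : V) ∈ p.2.2.support := hxtrav
      refine hnr ⟨p.1, hp.1, p.2.2.takeUntil _ hmem, ?_⟩
      intro y hy hbad
      exact hforall y hbad (SimpleGraph.Walk.support_takeUntil_subset _ hmem hy)
    · exact hforall x hxF' hxtrav

/-- Identifiability at level `k ≤ σ` implies `k`-connectivity of the star graph. -/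
lemma ident_kConnected [Fintype V] {G : SimpleGraph V} {M : Set V} {k : ℕ}
    (hid : Identifiable (CAP G M) Mᶜ k) (hk : k ≤ Mᶜ.ncard) :
    KConnected (StarGraph G Mᶜ M) k := by
  classical
  have hcard : Nat.card (Option ↥Mᶜ) = Mᶜ.ncard + 1 := by
    have := Fintype.ofFinite ↥Mᶜ
    rw [Nat.card_eq_fintype_card, Fintype.card_option, ← Nat.card_eq_fintype_card,
      Nat.card_coe_set_eq]
  refine ⟨by omega, ?_⟩
  intro S hS
  have hSne : Sᶜ.Nonempty := by
    by_contra hcon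
    rw [Set.not_nonempty_iff_eq_empty, Set.compl_empty_iff] at hcon
    rw [hcon, Set.ncard_univ, hcard] at hS
    omega
  obtain ⟨x0, hx0⟩ := hSne
  have key : ∀ (u : ↥Mᶜ) (hu : some u ∈ Sᶜ), ∃ (z : ↥Mᶜ) (hz : some z ∈ Sᶜ),
      (∃ m' ∈ M, G.Adj (z : V) m') ∧
      ((StarGraph G Mᶜ M).induce Sᶜ).Reachable ⟨some u, hu⟩ ⟨some z, hz⟩ := by
    intro u hu
    obtain ⟨m, hm, w, hw⟩ := lemC hid hS hu
    have hw' : ∀ y ∈ w.reverse.support, y ∉ badOf Mᶜ S := by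
      intro y hy
      rw [SimpleGraph.Walk.support_reverse] at hy
      exact hw y (List.mem_reverse.mp hy)
    rcases lemB w.reverse hm hw' with hM | ⟨u', hu', heq, z, hz, hzadj, hreach⟩
    · exact absurd hM u.2
    · obtain rfl : u' = u := Subtype.ext heq.symm
      exact ⟨z, hz, hzadj, hreach⟩
  have keynone : ∀ (u : ↥Mᶜ) (hu : some u ∈ Sᶜ) (hn : (none : Option ↥Mᶜ) ∈ Sᶜ),
      ((StarGraph G Mᶜ M).induce Sᶜ).Reachable ⟨some u, hu⟩ ⟨none, hn⟩ := by
    intro u hu hn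
    obtain ⟨z, hz, hzadj, hreach⟩ := key u hu
    have hadj : ((StarGraph G Mᶜ M).induce Sᶜ).Adj ⟨some z, hz⟩ ⟨none, hn⟩ := by
      show (StarGraph G Mᶜ M).Adj (some z) none
      exact hzadj
    exact hreach.trans hadj.reachable
  have hpre : ((StarGraph G Mᶜ M).induce Sᶜ).Preconnected := by
    rintro ⟨(_ | u), hxa⟩ ⟨(_ | w), hxb⟩
    · exact SimpleGraph.Reachable.refl _
    · exact (keynone w hxb hxa).symm
    · exact keynone u hxa hxb
    · by_cases huw : u = w
      · subst huw
        exact SimpleGraph.Reachable.refl _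
      · obtain ⟨z1, hz1, hz1adj, hr1⟩ := key u hxa
        obtain ⟨z2, hz2, hz2adj, hr2⟩ := key w hxb
        by_cases hz : z1 = z2
        · subst hz
          exact hr1.trans hr2.symm
        · have hadj : ((StarGraph G Mᶜ M).induce Sᶜ).Adj ⟨some z1, hz1⟩ ⟨some z2, hz2⟩ := by
            show (StarGraph G Mᶜ M).Adj (some z1) (some z2)
            exact ⟨fun hv => hz (Subtype.ext hv), Or.inr ⟨hz1adj, hz2adj⟩⟩
          exact hr1.trans (hadj.reachable.trans hr2.symm)
  haveI : Nonempty ↥(Sᶜ) := ⟨⟨x0, hx0⟩⟩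
  exact ⟨hpre⟩

/-- `d`-connectivity of the star graph implies `(d-1)`-identifiability. -/
lemma kConnected_ident [Fintype V] {G : SimpleGraph V} {M : Set V} {d : ℕ}
    (hd : KConnected (StarGraph G Mᶜ M) d) (hd1 : 1 ≤ d) :
    Identifiable (CAP G M) Mᶜ (d - 1) := by
  classical
  have oneSide : ∀ F F' : Set V, F' ⊆ Mᶜ → F'.ncard ≤ d - 1 →
      ∀ v, v ∈ F → v ∉ F' → v ∈ Mᶜ →
      ∃ p ∈ CAP G M, (∃ x ∈ F, Traverses p x) ∧ ∀ x ∈ F', ¬ Traverses p x := by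
    intro F F' hF' hcF' v hvF hvF' hvc
    set S : Set (Option ↥Mᶜ) := some '' (Subtype.val ⁻¹' F') with hSdef
    have hScard : S.ncard = F'.ncard := by
      rw [Set.ncard_image_of_injective _ (Option.some_injective _)]
      have himg : Subtype.val '' (Subtype.val ⁻¹' F' : Set ↥Mᶜ) = F' := by
        rw [Set.image_preimage_eq_inter_range, Subtype.range_coe]
        exact Set.inter_eq_self_of_subset_left hF'
      calc (Subtype.val ⁻¹' F' : Set ↥Mᶜ).ncard
          = (Subtype.val '' (Subtype.val ⁻¹' F' : Set ↥Mᶜ)).ncard :=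
            (Set.ncard_image_of_injective _ Subtype.val_injective).symm
        _ = F'.ncard := by rw [himg]
    have hconn := hd.2 S (by rw [hScard]; omega)
    have hvS : some (⟨v, hvc⟩ : ↥Mᶜ) ∈ Sᶜ := by
      rintro ⟨x, hx, hxe⟩
      have hxv : x = ⟨v, hvc⟩ := Option.some_injective _ hxe
      rw [hxv] at hx
      exact hvF' hx
    have hnS : (none : Option ↥Mᶜ) ∈ Sᶜ := by
      rintro ⟨x, _, hxe⟩
      exact Option.some_ne_none _ hxe
    obtain ⟨p⟩ := hconn.preconnected ⟨some ⟨v, hvc⟩, hvS⟩ ⟨none, hnS⟩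
    rcases lemA p rfl with hnone | ⟨u, heq, hreach⟩
    · exact absurd hnone (Option.some_ne_none _)
    · have huv : (u : V) = v := by
        have h2 : (⟨v, hvc⟩ : ↥Mᶜ) = u := Option.some_injective _ heq
        rw [← h2]
      have hbad : badOf Mᶜ S = F' := by
        ext x
        constructor
        · rintro ⟨hx, y, hy, hye⟩
          have hyx : y = ⟨x, hx⟩ := Option.some_injective _ hye
          rw [hyx] at hy
          exact hy
        · intro hx
          exact ⟨hF' hx, ⟨⟨x, hF' hx⟩, hx, rfl⟩⟩
      rw [hbad, huv] at hreach
      exact reachM_left hvF hreach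
  intro F F' hF hF' hcF hcF' hne
  have hsym : (∃ v, v ∈ F ∧ v ∉ F') ∨ ∃ v, v ∈ F' ∧ v ∉ F := by
    by_contra hcon
    push_neg at hcon
    exact hne (Set.Subset.antisymm (fun x hx => hcon.1 x hx) (fun x hx => hcon.2 x hx))
  rcases hsym with ⟨v, hv1, hv2⟩ | ⟨v, hv1, hv2⟩
  · exact Or.inl (oneSide F F' hF' hcF' v hv1 hv2 (hF hv1))
  · exact Or.inr (oneSide F' F hF hcF v hv1 hv2 (hF' hv1))

end Aux


/-- Maximum identifiability under CAP: if `δ(G*) ≤ σ − 1` then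
`δ(G*) − 1 ≤ Ω_CAP(G) ≤ δ(G*)`. -/
theorem stmt_15 {V : Type*} [Fintype V] (G : SimpleGraph V) (hG : G.Connected)
    (M : Set V) (hM : M.Nonempty)
    (h : (vertexConnectivity (StarGraph G Mᶜ M) : ℤ) ≤ (Mᶜ.ncard : ℤ) - 1) :
    (vertexConnectivity (StarGraph G Mᶜ M) : ℤ) - 1 ≤
        (maxIdent (CAP G M) Mᶜ : ℤ) ∧
      (maxIdent (CAP G M) Mᶜ : ℤ) ≤
        (vertexConnectivity (StarGraph G Mᶜ M) : ℤ) := by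
  classical
  set σ := Mᶜ.ncard with hσ
  set d := vertexConnectivity (StarGraph G Mᶜ M) with hd
  set Ω := maxIdent (CAP G M) Mᶜ with hΩ
  have hcard : Nat.card (Option ↥Mᶜ) = σ + 1 := by
    have := Fintype.ofFinite ↥Mᶜ
    rw [Nat.card_eq_fintype_card, Fintype.card_option, ← Nat.card_eq_fintype_card,
      Nat.card_coe_set_eq]
  have hKbdd : ∀ k ∈ {k | KConnected (StarGraph G Mᶜ M) k}, k ≤ σ := by
    intro k hk
    have h1 := hk.1
    rw [hcard] at h1
    omega
  have hK0 : (0 : ℕ) ∈ {k | KConnected (StarGraph G Mᶜ M) k} :=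
    ⟨by rw [hcard]; omega, fun S hS => absurd hS (Nat.not_lt_zero _)⟩
  have hdK : KConnected (StarGraph G Mᶜ M) d :=
    Nat.sSup_mem ⟨0, hK0⟩ ⟨σ, hKbdd⟩
  have hI0 : (0 : ℕ) ∈ {k | k ≤ σ ∧ Identifiable (CAP G M) Mᶜ k} := by
    refine ⟨Nat.zero_le _, ?_⟩
    intro F F' hF hF' hcF hcF' hne
    have h1 : F = ∅ := by
      rw [← Set.ncard_eq_zero (Set.toFinite F)]
      omega
    have h2 : F' = ∅ := by
      rw [← Set.ncard_eq_zero (Set.toFinite F')]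
      omega
    exact absurd (h1.trans h2.symm) hne
  have hIbdd : BddAbove {k | k ≤ σ ∧ Identifiable (CAP G M) Mᶜ k} :=
    ⟨σ, fun k hk => hk.1⟩
  have hupper : Ω ≤ d := by
    apply csSup_le ⟨0, hI0⟩
    intro k hk
    exact le_csSup ⟨σ, hKbdd⟩ (ident_kConnected hk.2 hk.1)
  have hlower : d - 1 ≤ Ω := by
    rcases Nat.eq_zero_or_pos d with h0 | h1
    · rw [h0]
      exact Nat.zero_le _
    · have hdσ : d + 1 ≤ σ := by
        have : (d : ℤ) + 1 ≤ (σ : ℤ) := by linarith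
        exact_mod_cast this
      apply le_csSup hIbdd
      exact ⟨by omega, kConnected_ident hdK h1⟩
  constructor <;> omega
end

section
/- Let k be an integer with 1 ≤ k ≤ σ − 1. If G is k-identifiable under CSP, then the auxiliary graph G* is (k+1)-vertex-connected and, for every monitor m ∈ M, the auxiliary graph G_m is k-vertex-connected. -/
open SimpleGraph

/-! ### Auxiliary lemmas for `stmt_17` -/

/-- Pure list lemma: a nodup `R`-chain that starts and ends outside `C` but
visits `C` must contain two distinct elements of the "boundary" `B`. -/
lemma list_boundary {α : Type*} {R : α → α → Prop} (hsymm : Symmetric R)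
    {C B : Set α} (hcl : ∀ c ∈ C, ∀ z, R c z → z ∈ C ∨ z ∈ B)
    {l : List α} (hch : l.Chain' R) (hnd : l.Nodup)
    {u : α} (hu : u ∈ l) (huC : u ∈ C)
    (hhead : ∀ h : 0 < l.length, l.get ⟨0, h⟩ ∉ C)
    (hlast : ∀ h : 0 < l.length, l.get ⟨l.length - 1, by omega⟩ ∉ C) :
    ∃ a ∈ B, ∃ b ∈ B, a ≠ b ∧ a ∈ l ∧ b ∈ l := by
  classical
  obtain ⟨iu, hiu⟩ := List.mem_iff_get.mp hu
  have hpos : 0 < l.length := iu.pos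
  set Sf : Finset (Fin l.length) := Finset.univ.filter (fun i => l.get i ∈ C) with hSf
  have hiuS : iu ∈ Sf := by
    simp only [hSf, Finset.mem_filter, Finset.mem_univ, true_and]
    rw [hiu]; exact huC
  have hSne : Sf.Nonempty := ⟨iu, hiuS⟩
  set i0 := Sf.min' hSne with hi0
  set i1 := Sf.max' hSne with hi1
  have h0C : l.get i0 ∈ C := by
    have := Sf.min'_mem hSne
    simpa only [hSf, Finset.mem_filter, Finset.mem_univ, true_and] using this
  have h1C : l.get i1 ∈ C := by
    have := Sf.max'_mem hSne
    simpa only [hSf, Finset.mem_filter, Finset.mem_univ, true_and] using this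
  have h01 : (i0 : ℕ) ≤ (i1 : ℕ) := Sf.min'_le i1 (Sf.max'_mem hSne)
  have hi0pos : 0 < (i0 : ℕ) := by
    rcases Nat.eq_zero_or_pos (i0 : ℕ) with h | h
    · exfalso
      apply hhead hpos
      have : i0 = (⟨0, hpos⟩ : Fin l.length) := Fin.ext h
      rw [← this]; exact h0C
    · exact h
  have hi1lt : (i1 : ℕ) < l.length - 1 := by
    by_contra h
    push_neg at h
    have h' : (i1 : ℕ) = l.length - 1 := by
      have := i1.2; omega
    apply hlast hpos
    have : i1 = (⟨l.length - 1, by omega⟩ : Fin l.length) := Fin.ext h'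
    rw [← this]; exact h1C
  have ha_lt : (i0 : ℕ) - 1 < l.length := by omega
  have hb_lt : (i1 : ℕ) + 1 < l.length := by omega
  set a := l.get ⟨(i0 : ℕ) - 1, ha_lt⟩ with haset
  set b := l.get ⟨(i1 : ℕ) + 1, hb_lt⟩ with hbset
  have haC : a ∉ C := by
    intro hC
    have hmem : (⟨(i0 : ℕ) - 1, ha_lt⟩ : Fin l.length) ∈ Sf := by
      simp only [hSf, Finset.mem_filter, Finset.mem_univ, true_and]; exact hC
    have h2 := Sf.min'_le _ hmem
    rw [← hi0] at h2
    have h3 : (i0 : ℕ) ≤ (i0 : ℕ) - 1 := h2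
    omega
  have hbC : b ∉ C := by
    intro hC
    have hmem : (⟨(i1 : ℕ) + 1, hb_lt⟩ : Fin l.length) ∈ Sf := by
      simp only [hSf, Finset.mem_filter, Finset.mem_univ, true_and]; exact hC
    have h2 := Sf.le_max' _ hmem
    rw [← hi1] at h2
    have h3 : (i1 : ℕ) + 1 ≤ (i1 : ℕ) := h2
    omega
  have hchain := List.isChain_iff_getElem.mp hch
  have hadj_a : R (l.get i0) a := by
    have h := hchain ((i0 : ℕ) - 1) (by omega)
    have e2 : (i0 : ℕ) - 1 + 1 = (i0 : ℕ) := by omega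
    simp only [e2] at h
    rw [haset]
    simpa only [List.get_eq_getElem] using hsymm h
  have hadj_b : R (l.get i1) b := by
    have h := hchain (i1 : ℕ) (by omega)
    rw [hbset]
    simpa only [List.get_eq_getElem] using h
  have haB : a ∈ B := (hcl _ h0C a hadj_a).resolve_left haC
  have hbB : b ∈ B := (hcl _ h1C b hadj_b).resolve_left hbC
  refine ⟨a, haB, b, hbB, ?_, List.get_mem l _, List.get_mem l _⟩
  intro hab
  have h4 := (hnd.get_inj_iff).mp (haset ▸ hbset ▸ hab)
  have h5 : (i0 : ℕ) - 1 = (i1 : ℕ) + 1 := congrArg Fin.val h4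
  omega

/-- The set of non-monitors whose `some`-image lies in `S`. -/
def Tset {V : Type*} (M : Set V) (S : Set (Option ↥Mᶜ)) : Set V :=
  {w | ∃ hw : w ∈ Mᶜ, (some (⟨w, hw⟩ : ↥Mᶜ) : Option ↥Mᶜ) ∈ S}

lemma Tset_subset {V : Type*} (M : Set V) (S : Set (Option ↥Mᶜ)) :
    Tset M S ⊆ Mᶜ := fun _ hw => hw.1

lemma Tset_ncard_le {V : Type*} [Fintype V] (M : Set V)
    (S : Set (Option ↥Mᶜ)) : (Tset M S).ncard ≤ S.ncard := by
  classical
  have h1 : Tset M S = Subtype.val '' {u : ↥Mᶜ | (some u : Option ↥Mᶜ) ∈ S} := by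
    ext w
    constructor
    · rintro ⟨hw, hS⟩; exact ⟨⟨w, hw⟩, hS, rfl⟩
    · rintro ⟨u, hu, rfl⟩; exact ⟨u.2, hu⟩
  rw [h1, Set.ncard_image_of_injective _ Subtype.val_injective]
  have h2 : {u : ↥Mᶜ | (some u : Option ↥Mᶜ) ∈ S} = some ⁻¹' S := rfl
  rw [h2]
  calc (some ⁻¹' S).ncard
      = (some '' (some ⁻¹' S)).ncard :=
        (Set.ncard_image_of_injective _ (Option.some_injective _)).symm
    _ ≤ S.ncard := Set.ncard_le_ncard (Set.image_preimage_subset _ _) (Set.toFinite _)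

/-- Main structural lemma: if the auxiliary graph `StarGraph G Mᶜ M'` minus `S`
is disconnected, there is a non-monitor `u` outside `S` such that every CSP
path traversing `u` traverses two distinct vertices of `Tset M S ∪ (M \ M')`. -/
lemma starGraph_key {V : Type*} [Fintype V] (G : SimpleGraph V) (M M' : Set V)
    (S : Set (Option ↥Mᶜ)) (hne : Sᶜ.Nonempty)
    (hdis : ¬ ((StarGraph G Mᶜ M').induce Sᶜ).Connected) :
    ∃ u : ↥Mᶜ, (some u : Option ↥Mᶜ) ∉ S ∧
      ∀ p ∈ CSP G M, Traverses p (u : V) →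
        ∃ a ∈ Tset M S ∪ (M \ M'), ∃ b ∈ Tset M S ∪ (M \ M'),
          a ≠ b ∧ Traverses p a ∧ Traverses p b := by
  classical
  set H := StarGraph G Mᶜ M' with hH
  have hne' : Nonempty ↥(Sᶜ) := hne.to_subtype
  have hnp : ¬ (H.induce Sᶜ).Preconnected :=
    fun h => hdis ((connected_iff _).mpr ⟨h, hne'⟩)
  rw [Preconnected] at hnp
  push_neg at hnp
  obtain ⟨x, y, hxy⟩ := hnp
  set K : Set (Option ↥Mᶜ) :=
    {z | z = none ∨ ∃ w : ↥Mᶜ, z = some w ∧ ∃ m'' ∈ M', G.Adj (w : V) m''} with hK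
  have Kclique : ∀ z1 ∈ K, ∀ z2 ∈ K, z1 ≠ z2 → H.Adj z1 z2 := by
    rintro z1 hz1 z2 hz2 hne12
    rcases hz1 with rfl | ⟨w1, rfl, hw1⟩ <;> rcases hz2 with rfl | ⟨w2, rfl, hw2⟩
    · exact absurd rfl hne12
    · exact hw2
    · exact hw1
    · refine ⟨fun h => hne12 (congrArg _ (Subtype.ext h)), Or.inr ⟨hw1, hw2⟩⟩
  have key : ∃ x0 : ↥(Sᶜ), ∀ z : ↥(Sᶜ),
      (H.induce Sᶜ).Reachable x0 z → (z : Option ↥Mᶜ) ∉ K := by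
    by_contra hcon
    push_neg at hcon
    obtain ⟨zx, hzx, hzxK⟩ := hcon x
    obtain ⟨zy, hzy, hzyK⟩ := hcon y
    apply hxy
    refine hzx.trans (Reachable.trans ?_ hzy.symm)
    by_cases hzz : zx = zy
    · rw [hzz]
    · exact SimpleGraph.Adj.reachable
        (Kclique _ hzxK _ hzyK (fun h => hzz (Subtype.ext h)))
  obtain ⟨x0, hx0⟩ := key
  have hx0K : (x0 : Option ↥Mᶜ) ∉ K := hx0 x0 (Reachable.refl x0)
  rcases hval : (x0 : Option ↥Mᶜ) with _ | u
  · rw [hval] at hx0K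
    exact absurd (Or.inl rfl) hx0K
  have huS : (some u : Option ↥Mᶜ) ∉ S := by rw [← hval]; exact x0.2
  set C : Set V := {w | ∃ hw : w ∈ Mᶜ, ∃ hs : (some (⟨w, hw⟩ : ↥Mᶜ) : Option ↥Mᶜ) ∈ Sᶜ,
      (H.induce Sᶜ).Reachable x0 ⟨some ⟨w, hw⟩, hs⟩} with hC
  have hCM : ∀ w ∈ C, w ∉ M := by rintro w ⟨hw, _⟩; exact hw
  have hx0eq : ∀ (hs : (some u : Option ↥Mᶜ) ∈ Sᶜ),
      x0 = (⟨some u, hs⟩ : ↥(Sᶜ)) := fun hs => Subtype.ext hval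
  have huC : (u : V) ∈ C := by
    have hs : (some (⟨(u : V), u.2⟩ : ↥Mᶜ) : Option ↥Mᶜ) ∈ Sᶜ := huS
    refine ⟨u.2, hs, ?_⟩
    have hx0e : x0 = (⟨some ⟨(u : V), u.2⟩, hs⟩ : ↥(Sᶜ)) := Subtype.ext (by rw [hval])
    rw [← hx0e]
  have hcl : ∀ c ∈ C, ∀ z, G.Adj c z → z ∈ C ∨ z ∈ (Tset M S ∪ (M \ M')) := by
    rintro c ⟨hcM, hcS, hreach⟩ z hadj
    have hcK : (some (⟨c, hcM⟩ : ↥Mᶜ) : Option ↥Mᶜ) ∉ K := hx0 _ hreach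
    have hcadj : ¬ ∃ m'' ∈ M', G.Adj c m'' := fun hh => hcK (Or.inr ⟨_, rfl, hh⟩)
    by_cases hzM : z ∈ M
    · exact Or.inr (Or.inr ⟨hzM, fun hzM' => hcadj ⟨z, hzM', hadj⟩⟩)
    · have hzc : z ∈ Mᶜ := hzM
      by_cases hzS : (some (⟨z, hzc⟩ : ↥Mᶜ) : Option ↥Mᶜ) ∈ S
      · exact Or.inr (Or.inl ⟨hzc, hzS⟩)
      · left
        have hadj' : H.Adj (some ⟨c, hcM⟩) (some ⟨z, hzc⟩) := ⟨hadj.ne, Or.inl hadj⟩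
        exact ⟨hzc, hzS, hreach.trans (SimpleGraph.Adj.reachable
          (show (H.induce Sᶜ).Adj ⟨some ⟨c, hcM⟩, hcS⟩ ⟨some ⟨z, hzc⟩, hzS⟩ from hadj'))⟩
  refine ⟨u, huS, ?_⟩
  rintro ⟨m1, m2, w⟩ ⟨hm1, hm2, hm12, hpath⟩ htrav
  have hch : w.support.Chain' G.Adj := w.isChain_adj_support
  have hnd : w.support.Nodup := hpath.support_nodup
  have hhead : ∀ h : 0 < w.support.length, w.support.get ⟨0, h⟩ ∉ C := by
    intro h hCmem
    have e : w.support.get ⟨0, h⟩ = m1 := by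
      rw [List.get_eq_getElem, List.getElem_zero]
      exact w.head_support
    have : w.support.get ⟨0, h⟩ ∈ M := by rw [e]; exact hm1
    exact hCM _ hCmem this
  have hlast : ∀ h : 0 < w.support.length,
      w.support.get ⟨w.support.length - 1, by omega⟩ ∉ C := by
    intro h hCmem
    have e : w.support.get ⟨w.support.length - 1, by omega⟩ = m2 := by
      rw [List.get_eq_getElem, ← List.getLast_eq_getElem]
      exact w.getLast_support
    have : w.support.get ⟨w.support.length - 1, by omega⟩ ∈ M := by rw [e]; exact hm2
    exact hCM _ hCmem this
  obtain ⟨a, haB, b, hbB, hab, ha, hb⟩ :=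
    list_boundary (fun _ _ h => h.symm) hcl hch hnd htrav huC hhead hlast
  exact ⟨a, haB, b, hbB, hab, ha, hb⟩

/-- Derive a contradiction with `k`-identifiability from a node `u` all of
whose CSP paths are covered by a small set `T`. -/
lemma covered_contra {V : Type*} [Fintype V] {G : SimpleGraph V} {M : Set V}
    {k : ℕ} (hid : Identifiable (CSP G M) Mᶜ k) (T : Set V) (hT : T ⊆ Mᶜ)
    (hTcard : T.ncard + 1 ≤ k) (u : V) (hu : u ∈ Mᶜ) (huT : u ∉ T)
    (hhit : ∀ p ∈ CSP G M, Traverses p u → ∃ c ∈ T, Traverses p c) : False := by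
  have hFF' : T ≠ T ∪ {u} := by
    intro h
    exact huT (h ▸ (Or.inr rfl : u ∈ T ∪ {u}))
  have hcard' : (T ∪ {u}).ncard ≤ k := by
    rw [Set.union_singleton]
    calc (insert u T).ncard ≤ T.ncard + 1 := Set.ncard_insert_le _ _
      _ ≤ k := hTcard
  have h := hid T (T ∪ {u}) hT
    (Set.union_subset hT (Set.singleton_subset_iff.mpr hu))
    (by omega) hcard' hFF'
  rcases h with ⟨p, hp, ⟨x, hxF, hx⟩, havoid⟩ | ⟨p, hp, ⟨x, hxF', hx⟩, havoid⟩
  · exact havoid x (Or.inl hxF) hx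
  · rcases hxF' with hxT | hxu
    · exact havoid x hxT hx
    · obtain ⟨c, hcT, hc⟩ := hhit p hp (hxu ▸ hx)
      exact havoid c hcT hc

/-- If `1 ≤ k ≤ σ − 1` and `G` is `k`-identifiable under CSP, then the
auxiliary graph `G*` is `(k+1)`-vertex-connected and `G_m` is
`k`-vertex-connected for every monitor `m`. -/
theorem stmt_17 {V : Type*} [Fintype V] (G : SimpleGraph V) (hG : G.Connected)
    (M : Set V) (hM : M.Nonempty) (k : ℕ) (hk1 : 1 ≤ k)
    (hk : k + 1 ≤ Mᶜ.ncard) (hid : Identifiable (CSP G M) Mᶜ k) :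
    KConnected (StarGraph G Mᶜ M) (k + 1) ∧
      ∀ m ∈ M, KConnected (StarGraph G Mᶜ (M \ {m})) k := by
  classical
  have hcardOpt : Nat.card (Option ↥Mᶜ) = Mᶜ.ncard + 1 := by
    rw [Finite.card_option, Nat.card_coe_set_eq]
  have hne_of_card : ∀ S : Set (Option ↥Mᶜ), S.ncard ≤ k → Sᶜ.Nonempty := by
    intro S hS
    rcases Set.eq_empty_or_nonempty Sᶜ with h | h
    · exfalso
      have hSuniv : S = Set.univ := by
        rw [← Set.compl_empty, ← h, compl_compl]
      rw [hSuniv, Set.ncard_univ, hcardOpt] at hS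
      omega
    · exact h
  have huT_of : ∀ (S : Set (Option ↥Mᶜ)) (u : ↥Mᶜ),
      (some u : Option ↥Mᶜ) ∉ S → (u : V) ∉ Tset M S := by
    rintro S u huS ⟨hw, hS⟩
    apply huS
    have : (⟨(u : V), hw⟩ : ↥Mᶜ) = u := Subtype.ext rfl
    rwa [this] at hS
  constructor
  · refine ⟨by rw [hcardOpt]; omega, ?_⟩
    intro S hS
    by_contra hdis
    have hSk : S.ncard ≤ k := by omega
    obtain ⟨u, huS, hkey⟩ := starGraph_key G M M S (hne_of_card S hSk) hdis
    have hdiff : M \ M = ∅ := Set.diff_self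
    have hkey' : ∀ p ∈ CSP G M, Traverses p (u : V) →
        ∃ a ∈ Tset M S, ∃ b ∈ Tset M S, a ≠ b ∧ Traverses p a ∧ Traverses p b := by
      intro p hp ht
      obtain ⟨a, haB, b, hbB, hab, ha, hb⟩ := hkey p hp ht
      rw [hdiff, Set.union_empty] at haB hbB
      exact ⟨a, haB, b, hbB, hab, ha, hb⟩
    have hTS : (Tset M S).ncard ≤ k := le_trans (Tset_ncard_le M S) hSk
    have huT : (u : V) ∉ Tset M S := huT_of S u huS
    rcases Set.eq_empty_or_nonempty (Tset M S) with hTe | ⟨s, hs⟩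
    · refine covered_contra hid ∅ (Set.empty_subset _) (by simpa using hk1)
        (u : V) u.2 (Set.notMem_empty _) ?_
      intro p hp ht
      obtain ⟨a, haT, _⟩ := hkey' p hp ht
      rw [hTe] at haT
      exact absurd haT (Set.notMem_empty a)
    · refine covered_contra hid (Tset M S \ {s})
        ((Set.diff_subset).trans (Tset_subset M S))
        ?_ (u : V) u.2 (fun h => huT h.1) ?_
      · rw [Set.ncard_diff_singleton_add_one hs (Set.toFinite _)]
        exact hTS
      · intro p hp ht
        obtain ⟨a, haT, b, hbT, hab, ha, hb⟩ := hkey' p hp ht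
        by_cases has : a = s
        · exact ⟨b, ⟨hbT, fun hbs => hab (has.trans hbs.symm)⟩, hb⟩
        · exact ⟨a, ⟨haT, has⟩, ha⟩
  · intro m hm
    refine ⟨by rw [hcardOpt]; omega, ?_⟩
    intro S hS
    by_contra hdis
    have hSk : S.ncard ≤ k := by omega
    obtain ⟨u, huS, hkey⟩ := starGraph_key G M (M \ {m}) S (hne_of_card S hSk) hdis
    have hdiff : M \ (M \ {m}) = {m} :=
      Set.diff_diff_cancel_left (Set.singleton_subset_iff.mpr hm)
    have huT : (u : V) ∉ Tset M S := huT_of S u huS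
    refine covered_contra hid (Tset M S) (Tset_subset M S) ?_ (u : V) u.2 huT ?_
    · have := Tset_ncard_le M S
      omega
    · intro p hp ht
      obtain ⟨a, haB, b, hbB, hab, ha, hb⟩ := hkey p hp ht
      rw [hdiff] at haB hbB
      rcases haB with haT | ham
      · exact ⟨a, haT, ha⟩
      · rcases hbB with hbT | hbm
        · exact ⟨b, hbT, hb⟩
        · exact absurd (ham.trans hbm.symm) hab
end
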